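/- arXiv:1407.3123 — 11 statements merged into one kernel-verified Lean document; each statement's English description precedes it below -/
import Mathlib

section
/- There exists a standard budget game that admits no pure Nash equilibrium. -/
noncomputable section

open Finset

/-- A (standard) budget game: finitely many players `ι`, resources `ρ` and tasks `τ`.
Each resource has a positive budget, each task a nonnegative demand on every resource,
each task belongs to a unique player (`owner`), and each player has a nonempty finite
family of strategies, each strategy being a set of her own tasks. -/
structure BudgetGame (ι ρ τ : Type*) [Fintype ι] [Fintype ρ] [Fintype τ]
    [DecidableEq ι] [DecidableEq τ] where
  budget : ρ → ℝ
  budget_pos : ∀ r, 0 < budget r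
  demand : τ → ρ → ℝ
  demand_nonneg : ∀ t r, 0 ≤ demand t r
  owner : τ → ι
  strat : ι → Finset (Finset τ)
  strat_nonempty : ∀ i, (strat i).Nonempty
  strat_owned : ∀ i, ∀ A ∈ strat i, ∀ t ∈ A, owner t = i

namespace BudgetGame

variable {ι ρ τ : Type*} [Fintype ι] [Fintype ρ] [Fintype τ]
  [DecidableEq ι] [DecidableEq τ]

/-- `s` is a strategy profile: player `i` plays a strategy from her strategy set. -/
def Valid (G : BudgetGame ι ρ τ) (s : ι → Finset τ) : Prop :=
  ∀ i, s i ∈ G.strat i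

/-- Total demand `D_r(s)` of the chosen tasks on resource `r`. -/
def totalDemand (G : BudgetGame ι ρ τ) (s : ι → Finset τ) (r : ρ) : ℝ :=
  ∑ i, ∑ t ∈ s i, G.demand t r

/-- Standard (proportional) utility `u_{t,r}(s) = min(t(r), b_r·t(r)/D_r(s))`
of a chosen task `t` from resource `r`. -/
def stdTaskUtil (G : BudgetGame ι ρ τ) (s : ι → Finset τ) (t : τ) (r : ρ) : ℝ :=
  min (G.demand t r) (G.budget r * G.demand t r / G.totalDemand s r)

/-- Utility of player `i` in the standard budget game. -/
def stdUtil (G : BudgetGame ι ρ τ) (s : ι → Finset τ) (i : ι) : ℝ :=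
  ∑ t ∈ s i, ∑ r, G.stdTaskUtil s t r

/-- Social welfare in the standard budget game. -/
def stdWelfare (G : BudgetGame ι ρ τ) (s : ι → Finset τ) : ℝ :=
  ∑ i, G.stdUtil s i

/-- Pure Nash equilibrium of the standard budget game. -/
def stdNE (G : BudgetGame ι ρ τ) (s : ι → Finset τ) : Prop :=
  G.Valid s ∧ ∀ i, ∀ a ∈ G.strat i,
    G.stdUtil (Function.update s i a) i ≤ G.stdUtil s i

/-- An ordering vector `≺ = (≺_r)_r` is encoded by injective rank functions:
`t' ≺_r t` iff `ord r t' < ord r t`. -/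
def InjOrd (ord : ρ → τ → ℕ) : Prop :=
  ∀ r, Function.Injective (ord r)

/-- Total demand on `r` of the chosen tasks that come strictly before `t` in `≺_r`. -/
def prefixDemand (G : BudgetGame ι ρ τ) (s : ι → Finset τ) (ord : ρ → τ → ℕ)
    (t : τ) (r : ρ) : ℝ :=
  ∑ i, ∑ t' ∈ (s i).filter (fun t' => ord r t' < ord r t), G.demand t' r

/-- Ordered utility `u_{t,r}(s,≺) = min(t(r), max(0, b_r − Σ_{t' ≺_r t chosen} t'(r)))`. -/
def ordTaskUtil (G : BudgetGame ι ρ τ) (s : ι → Finset τ) (ord : ρ → τ → ℕ)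
    (t : τ) (r : ρ) : ℝ :=
  min (G.demand t r) (max 0 (G.budget r - G.prefixDemand s ord t r))

/-- Utility of player `i` in the ordered budget game. -/
def ordUtil (G : BudgetGame ι ρ τ) (s : ι → Finset τ) (ord : ρ → τ → ℕ) (i : ι) : ℝ :=
  ∑ t ∈ s i, ∑ r, G.ordTaskUtil s ord t r

/-- Social welfare in the ordered budget game. -/
def ordWelfare (G : BudgetGame ι ρ τ) (s : ι → Finset τ) (ord : ρ → τ → ℕ) : ℝ :=
  ∑ i, G.ordUtil s ord i

/-- `ord'` arises from `ord` by appending the tasks of `newT` at the end of every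
resource order: it is injective per resource, keeps the relative order of all tasks
not in `newT`, and places every task of `newT` after all of them. -/
def IsReorder (ord ord' : ρ → τ → ℕ) (newT : Finset τ) : Prop :=
  InjOrd ord' ∧
  (∀ (r : ρ), ∀ x ∉ newT, ∀ y ∉ newT, (ord' r x < ord' r y ↔ ord r x < ord r y)) ∧
  (∀ (r : ρ), ∀ x ∉ newT, ∀ t ∈ newT, ord' r x < ord' r t)

/-- The tasks newly chosen when coalition `C` deviates from `s` to `s'`. -/
def newTasks (C : Finset ι) (s s' : ι → Finset τ) : Finset τ :=
  C.biUnion fun i => s' i \ s i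

/-- Pure Nash equilibrium of the ordered budget game: no unilateral deviation
(with the deviator's new tasks appended at the end of every resource order)
strictly increases the deviator's utility. -/
def ordNE (G : BudgetGame ι ρ τ) (s : ι → Finset τ) (ord : ρ → τ → ℕ) : Prop :=
  G.Valid s ∧ InjOrd ord ∧
  ∀ i, ∀ a ∈ G.strat i, ∀ ord' : ρ → τ → ℕ, IsReorder ord ord' (a \ s i) →
    G.ordUtil (Function.update s i a) ord' i ≤ G.ordUtil s ord i

/-- Strong equilibrium: no coalition can deviate (new tasks appended) so that
every member strictly improves. -/
def IsStrongEq (G : BudgetGame ι ρ τ) (s : ι → Finset τ) (ord : ρ → τ → ℕ) : Prop :=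
  G.Valid s ∧ InjOrd ord ∧
  ¬ ∃ (C : Finset ι) (s' : ι → Finset τ) (ord' : ρ → τ → ℕ),
      C.Nonempty ∧ G.Valid s' ∧ (∀ j ∉ C, s' j = s j) ∧
      IsReorder ord ord' (newTasks C s s') ∧
      ∀ i ∈ C, G.ordUtil s ord i < G.ordUtil s' ord' i

/-- Super strong equilibrium: no coalition can deviate (new tasks appended) so that
every member weakly improves and at least one member strictly improves. -/
def IsSuperStrongEq (G : BudgetGame ι ρ τ) (s : ι → Finset τ) (ord : ρ → τ → ℕ) : Prop :=
  G.Valid s ∧ InjOrd ord ∧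
  ¬ ∃ (C : Finset ι) (s' : ι → Finset τ) (ord' : ρ → τ → ℕ),
      C.Nonempty ∧ G.Valid s' ∧ (∀ j ∉ C, s' j = s j) ∧
      IsReorder ord ord' (newTasks C s s') ∧
      (∀ i ∈ C, G.ordUtil s ord i ≤ G.ordUtil s' ord' i) ∧
      (∃ i ∈ C, G.ordUtil s ord i < G.ordUtil s' ord' i)

end BudgetGame

/-- The counterexample game: 2 players, 3 resources (budget 1 each), 4 tasks.
Player 0 owns tasks 0,1 and plays `{0}` or `{1}`; player 1 owns tasks 2,3 and
plays `{2}` or `{3}`. Demands: task 0 ↦ (0,2,1), task 1 ↦ (3,0,1),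
task 2 ↦ (2,3,2), task 3 ↦ (3,1,3). Best responses cycle, so no pure NE. -/
def cexDemand : Fin 4 → Fin 3 → ℝ :=
  ![![0, 2, 1], ![3, 0, 1], ![2, 3, 2], ![3, 1, 3]]

def cexGame : BudgetGame (Fin 2) (Fin 3) (Fin 4) where
  budget := fun _ => 1
  budget_pos := fun _ => one_pos
  demand := cexDemand
  demand_nonneg := by
    intro t r
    fin_cases t <;> fin_cases r <;> norm_num [cexDemand]
  owner := ![0, 0, 1, 1]
  strat := ![{{0}, {1}}, {{2}, {3}}]
  strat_nonempty := by decide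
  strat_owned := by decide

open BudgetGame in
/-- there exists a standard budget game that admits no pure Nash
equilibrium. -/
theorem stmt_3 :
    ∃ (n m k : ℕ) (G : BudgetGame (Fin n) (Fin m) (Fin k)),
      ¬ ∃ s : Fin n → Finset (Fin k), G.stdNE s := by
  refine ⟨2, 3, 4, cexGame, ?_⟩
  rintro ⟨s, hvalid, hNE⟩
  have h0 : s 0 = {0} ∨ s 0 = {1} := by
    have h := hvalid 0
    simp only [cexGame, Matrix.cons_val_zero, Finset.mem_insert,
      Finset.mem_singleton] at h
    exact h
  have h1 : s 1 = {2} ∨ s 1 = {3} := by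
    have h := hvalid 1
    simp only [cexGame, Matrix.cons_val_one, Matrix.head_cons, Matrix.cons_val_zero, Finset.mem_insert,
      Finset.mem_singleton] at h
    exact h
  have hne : (1 : Fin 2) ≠ 0 := by decide
  rcases h0 with hs0 | hs0 <;> rcases h1 with hs1 | hs1
  · -- s = ({0},{2}) : player 0 deviates to {1}
    have key := hNE 0 {1} (by decide)
    simp only [stdUtil, stdTaskUtil, totalDemand, cexGame, cexDemand,
      Fin.sum_univ_two, Fin.sum_univ_three, Function.update_apply, if_pos rfl,
      if_neg hne, hs0, hs1, Finset.sum_singleton, Matrix.cons_val_zero,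
      Matrix.cons_val_one, Matrix.head_cons, Matrix.cons_val_two,
      Matrix.tail_cons, Matrix.cons_val_three] at key
    simp [Matrix.vecHead, Matrix.vecTail] at key
    norm_num [min_def] at key
  · -- s = ({0},{3}) : player 1 deviates to {2}
    have key := hNE 1 {2} (by decide)
    simp only [stdUtil, stdTaskUtil, totalDemand, cexGame, cexDemand,
      Fin.sum_univ_two, Fin.sum_univ_three, Function.update_apply, if_pos rfl,
      if_neg hne.symm, hs0, hs1, Finset.sum_singleton, Matrix.cons_val_zero,
      Matrix.cons_val_one, Matrix.head_cons, Matrix.cons_val_two,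
      Matrix.tail_cons, Matrix.cons_val_three] at key
    simp [Matrix.vecHead, Matrix.vecTail] at key
    norm_num [min_def] at key
  · -- s = ({1},{2}) : player 1 deviates to {3}
    have key := hNE 1 {3} (by decide)
    simp only [stdUtil, stdTaskUtil, totalDemand, cexGame, cexDemand,
      Fin.sum_univ_two, Fin.sum_univ_three, Function.update_apply, if_pos rfl,
      if_neg hne.symm, hs0, hs1, Finset.sum_singleton, Matrix.cons_val_zero,
      Matrix.cons_val_one, Matrix.head_cons, Matrix.cons_val_two,
      Matrix.tail_cons, Matrix.cons_val_three] at key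
    simp [Matrix.vecHead, Matrix.vecTail] at key
    norm_num [min_def] at key
  · -- s = ({1},{3}) : player 0 deviates to {0}
    have key := hNE 0 {0} (by decide)
    simp only [stdUtil, stdTaskUtil, totalDemand, cexGame, cexDemand,
      Fin.sum_univ_two, Fin.sum_univ_three, Function.update_apply, if_pos rfl,
      if_neg hne, hs0, hs1, Finset.sum_singleton, Matrix.cons_val_zero,
      Matrix.cons_val_one, Matrix.head_cons, Matrix.cons_val_two,
      Matrix.tail_cons, Matrix.cons_val_three] at key
    simp [Matrix.vecHead, Matrix.vecTail] at key
    norm_num [min_def] at key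


end
end

section
/- If a standard budget game admits a pure Nash equilibrium s, then every strategy profile s* satisfies u(s*) ≤ 2·u(s); i.e., the price of anarchy of standard budget games is at most 2. -/
noncomputable section

open Finset

section PoAAux

/-- `min(a, b·a/c) = a · min(1, b/c)` for `a ≥ 0`. -/
lemma poa_min_scale (a b c : ℝ) (ha : 0 ≤ a) :
    min a (b * a / c) = a * min 1 (b / c) := by
  rw [mul_min_of_nonneg _ _ ha, mul_one]
  congr 1
  ring

/-- `x · min(1, b/x) = min(x, b)` for `x ≥ 0`, `b > 0`. -/
lemma poa_min_eq (x b : ℝ) (hx : 0 ≤ x) (hb : 0 < b) : x * min 1 (b / x) = min x b := by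
  rcases hx.eq_or_lt with h | h
  · rw [← h]
    simp [hb.le]
  · rw [mul_min_of_nonneg _ _ hx, mul_one, mul_div_cancel₀ _ h.ne']

/-- Monotonicity of the proportional utility in the denominator. -/
lemma poa_mono (a b c₁ c₂ : ℝ) (ha : 0 ≤ a) (hb : 0 < b) (h1 : a ≤ c₁) (h2 : c₁ ≤ c₂) :
    min a (b * a / c₂) ≤ min a (b * a / c₁) := by
  rcases ha.eq_or_lt with h | h
  · simp [← h]
  · have hc1 : 0 < c₁ := lt_of_lt_of_le h h1
    refine min_le_min le_rfl ?_
    have hba : 0 ≤ b * a := by positivity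
    gcongr

/-- Core arithmetic inequality behind the PoA ≤ 2 bound. -/
lemma poa_core (b x y : ℝ) (hb : 0 < b) (hx : 0 ≤ x) (hy : 0 ≤ y) :
    min x b ≤ min x (b * x / (x + y)) + min y b := by
  have hxy : 0 ≤ x + y := by linarith
  rcases hxy.eq_or_lt with h | h
  · have hx0 : x = 0 := by linarith
    have h0 : (0:ℝ) ≤ min y b := le_min hy hb.le
    simp only [hx0, mul_zero, zero_div, min_self]
    have : min (0:ℝ) b = 0 := min_eq_left hb.le
    rw [this]
    linarith
  · rcases le_total (x + y) b with h1 | h1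
    · have hxb : x ≤ b := by linarith
      have h2 : x ≤ b * x / (x + y) := by
        rw [le_div_iff₀ h]; nlinarith
      rw [min_eq_left hxb, min_eq_left h2]
      have : (0:ℝ) ≤ min y b := le_min hy hb.le
      linarith
    · rcases le_total y b with h2 | h2
      · rw [min_eq_left h2]
        rcases min_cases x (b * x / (x + y)) with ⟨hm, _⟩ | ⟨hm, _⟩ <;> rw [hm]
        · have := min_le_left x b
          linarith
        · have h3 : b - y ≤ b * x / (x + y) := by
            rw [le_div_iff₀ h]; nlinarith
          have := min_le_right x b
          linarith
      · rw [min_eq_right h2]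
        have h3 : (0:ℝ) ≤ min x (b * x / (x + y)) := le_min hx (by positivity)
        have := min_le_right x b
        linarith

open BudgetGame in
/-- Summation formula: total proportional utility with a fixed denominator vector `c`. -/
lemma poa_sum_min {ι ρ τ : Type*} [Fintype ι] [Fintype ρ] [Fintype τ]
    [DecidableEq ι] [DecidableEq τ]
    (G : BudgetGame ι ρ τ) (s : ι → Finset τ) (c : ρ → ℝ) :
    ∑ i, ∑ t ∈ s i, ∑ r, min (G.demand t r) (G.budget r * G.demand t r / c r)
      = ∑ r, G.totalDemand s r * min 1 (G.budget r / c r) := by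
  have h1 : ∀ i : ι, ∑ t ∈ s i, ∑ r, min (G.demand t r) (G.budget r * G.demand t r / c r)
      = ∑ r, ∑ t ∈ s i, min (G.demand t r) (G.budget r * G.demand t r / c r) :=
    fun i => Finset.sum_comm
  rw [Finset.sum_congr rfl fun i _ => h1 i, Finset.sum_comm]
  refine Finset.sum_congr rfl fun r _ => ?_
  simp_rw [poa_min_scale _ _ _ (G.demand_nonneg _ _), ← Finset.sum_mul]
  rfl

end PoAAux

open BudgetGame in
/-- if a standard budget game admits a pure Nash equilibrium `s`, then
every strategy profile `s*` satisfies `u(s*) ≤ 2·u(s)` (price of anarchy at most 2). -/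
theorem stmt_4 {ι ρ τ : Type*} [Fintype ι] [Fintype ρ] [Fintype τ]
    [DecidableEq ι] [DecidableEq τ]
    (G : BudgetGame ι ρ τ) (s sstar : ι → Finset τ)
    (hNE : G.stdNE s) (hstar : G.Valid sstar) :
    G.stdWelfare sstar ≤ 2 * G.stdWelfare s := by
  obtain ⟨hval, hne⟩ := hNE
  set b : ρ → ℝ := G.budget with hb
  set D : ρ → ℝ := fun r => G.totalDemand s r with hDdef
  set Ds : ρ → ℝ := fun r => G.totalDemand sstar r with hDsdef
  have hDnn : ∀ r, 0 ≤ D r := fun r =>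
    Finset.sum_nonneg fun i _ => Finset.sum_nonneg fun t _ => G.demand_nonneg t r
  have hDsnn : ∀ r, 0 ≤ Ds r := fun r =>
    Finset.sum_nonneg fun i _ => Finset.sum_nonneg fun t _ => G.demand_nonneg t r
  -- welfare formulas
  have hW : G.stdWelfare s = ∑ r, min (D r) (b r) := by
    calc G.stdWelfare s
        = ∑ i, ∑ t ∈ s i, ∑ r, min (G.demand t r) (b r * G.demand t r / D r) := rfl
      _ = ∑ r, D r * min 1 (b r / D r) := poa_sum_min G s D
      _ = ∑ r, min (D r) (b r) :=
          Finset.sum_congr rfl fun r _ => poa_min_eq _ _ (hDnn r) (G.budget_pos r)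
  have hWstar : G.stdWelfare sstar = ∑ r, min (Ds r) (b r) := by
    calc G.stdWelfare sstar
        = ∑ i, ∑ t ∈ sstar i, ∑ r, min (G.demand t r) (b r * G.demand t r / Ds r) := rfl
      _ = ∑ r, Ds r * min 1 (b r / Ds r) := poa_sum_min G sstar Ds
      _ = ∑ r, min (Ds r) (b r) :=
          Finset.sum_congr rfl fun r _ => poa_min_eq _ _ (hDsnn r) (G.budget_pos r)
  -- the Nash-equilibrium bound
  have hNEbound : ∑ r, Ds r * min 1 (b r / (D r + Ds r)) ≤ G.stdWelfare s := by
    have key : ∀ i, ∑ t ∈ sstar i, ∑ r,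
        min (G.demand t r) (b r * G.demand t r / (D r + Ds r)) ≤ G.stdUtil s i := by
      intro i
      set u : ι → Finset τ := Function.update s i (sstar i) with hu
      have hstep : ∑ t ∈ sstar i, ∑ r,
          min (G.demand t r) (b r * G.demand t r / (D r + Ds r)) ≤ G.stdUtil u i := by
        have hui : u i = sstar i := Function.update_self i (sstar i) s
        rw [BudgetGame.stdUtil, hui]
        refine Finset.sum_le_sum fun t ht => Finset.sum_le_sum fun r _ => ?_
        -- bounds on the deviated total demand
        have hle : G.demand t r ≤ G.totalDemand u r := by
          have h1 : G.demand t r ≤ ∑ t' ∈ u i, G.demand t' r := by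
            refine Finset.single_le_sum (fun t' _ => G.demand_nonneg t' r) ?_
            rw [hui]; exact ht
          refine h1.trans ?_
          exact Finset.single_le_sum
            (f := fun j => ∑ t' ∈ u j, G.demand t' r)
            (fun j _ => Finset.sum_nonneg fun t' _ => G.demand_nonneg t' r)
            (Finset.mem_univ i)
        have hup : G.totalDemand u r ≤ D r + Ds r := by
          have hfun : ∀ j, ∑ t' ∈ u j, G.demand t' r
              = Function.update (fun j => ∑ t' ∈ s j, G.demand t' r) i
                  (∑ t' ∈ sstar i, G.demand t' r) j := by
            intro j
            by_cases hj : j = i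
            · subst hj; simp [hu]
            · simp [hu, Function.update_of_ne hj]
          have h2 : G.totalDemand u r
              = (∑ t' ∈ sstar i, G.demand t' r)
                + ∑ j ∈ Finset.univ \ {i}, ∑ t' ∈ s j, G.demand t' r := by
            rw [BudgetGame.totalDemand, Finset.sum_congr rfl fun j _ => hfun j]
            exact Finset.sum_update_of_mem (Finset.mem_univ i)
              (fun j => ∑ t' ∈ s j, G.demand t' r) (∑ t' ∈ sstar i, G.demand t' r)
          have h3 : D r = (∑ t' ∈ s i, G.demand t' r)
                + ∑ j ∈ Finset.univ \ {i}, ∑ t' ∈ s j, G.demand t' r := by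
            rw [hDdef]
            exact Finset.sum_eq_add_sum_sdiff_singleton_of_mem (Finset.mem_univ i)
              (fun j => ∑ t' ∈ s j, G.demand t' r)
          have h4 : ∑ t' ∈ sstar i, G.demand t' r ≤ Ds r :=
            Finset.single_le_sum
              (f := fun j => ∑ t' ∈ sstar j, G.demand t' r)
              (fun j _ => Finset.sum_nonneg fun t' _ => G.demand_nonneg t' r)
              (Finset.mem_univ i)
          have h5 : 0 ≤ ∑ t' ∈ s i, G.demand t' r :=
            Finset.sum_nonneg fun t' _ => G.demand_nonneg t' r
          linarith
        exact poa_mono _ _ _ _ (G.demand_nonneg t r) (G.budget_pos r) hle hup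
      exact hstep.trans (hne i (sstar i) (hstar i))
    calc ∑ r, Ds r * min 1 (b r / (D r + Ds r))
        = ∑ i, ∑ t ∈ sstar i, ∑ r,
            min (G.demand t r) (b r * G.demand t r / (D r + Ds r)) :=
          (poa_sum_min G sstar (fun r => D r + Ds r)).symm
      _ ≤ ∑ i, G.stdUtil s i := Finset.sum_le_sum fun i _ => key i
      _ = G.stdWelfare s := rfl
  -- combine everything
  calc G.stdWelfare sstar = ∑ r, min (Ds r) (b r) := hWstar
    _ ≤ ∑ r, (Ds r * min 1 (b r / (D r + Ds r)) + min (D r) (b r)) := by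
        refine Finset.sum_le_sum fun r _ => ?_
        have hcore := poa_core (b r) (Ds r) (D r) (G.budget_pos r) (hDsnn r) (hDnn r)
        have hscale : min (Ds r) (b r * Ds r / (Ds r + D r))
            = Ds r * min 1 (b r / (D r + Ds r)) := by
          rw [poa_min_scale _ _ _ (hDsnn r), add_comm (Ds r) (D r)]
        rw [hscale] at hcore
        exact hcore
    _ = (∑ r, Ds r * min 1 (b r / (D r + Ds r))) + ∑ r, min (D r) (b r) :=
        Finset.sum_add_distrib
    _ ≤ G.stdWelfare s + G.stdWelfare s := add_le_add hNEbound (le_of_eq hW.symm)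
    _ = 2 * G.stdWelfare s := by ring

end
end

section
/- For every δ > 0 there exists a standard budget game with a pure Nash equilibrium s and a strategy profile s* such that u(s*) > (2 − δ)·u(s); i.e., the price of anarchy of standard budget games comes arbitrarily close to 2. -/
noncomputable section

open Finset

open BudgetGame in
/-- for every `δ > 0` there is a standard budget game with a pure Nash
equilibrium `s` and a strategy profile `s*` with `u(s*) > (2 − δ)·u(s)`. -/
theorem stmt_5 (δ : ℝ) (hδ : 0 < δ) :
    ∃ (n m k : ℕ) (G : BudgetGame (Fin n) (Fin m) (Fin k))
      (s sstar : Fin n → Finset (Fin k)),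
      G.stdNE s ∧ G.Valid sstar ∧
      (2 - δ) * G.stdWelfare s < G.stdWelfare sstar := by
  obtain ⟨Mn, hMn1, hMle⟩ : ∃ Mn : ℕ, 1 ≤ Mn ∧ 1/δ ≤ (Mn:ℝ) :=
    ⟨max 1 ⌈1/δ⌉₊, le_max_left _ _, le_trans (Nat.le_ceil _) (by exact_mod_cast Nat.le_max_right 1 _)⟩
  set M : ℝ := (Mn : ℝ) with hMdef
  have hM1 : (1:ℝ) ≤ M := by rw [hMdef]; exact_mod_cast hMn1
  have hM0 : (0:ℝ) < M := by linarith
  have hMp : (0:ℝ) < M + 1 := by linarith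
  have hfrac1 : M/(M+1) ≤ 1 := by rw [div_le_one hMp]; linarith
  have hfrac0 : 0 < M/(M+1) := by positivity
  have h2cases : ∀ j : Fin 2, j = 0 ∨ j = 1 := by decide
  refine ⟨2, 2, 3,
    { budget := ![1, M/(M+1)],
      budget_pos := by
        intro r
        rcases h2cases r with h | h <;> subst h <;> simp <;> positivity
      demand := fun t => ![![1,0],![M,0],![0,1]] t,
      demand_nonneg := by
        intro t r
        fin_cases t <;> rcases h2cases r with h | h <;> subst h <;> simp <;> positivity
      owner := ![0,1,1],
      strat := ![{{0}}, {{1},{2}}],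
      strat_nonempty := by intro i; rcases h2cases i with h | h <;> subst h <;> simp
      strat_owned := by decide },
    ![{0},{1}], ![{0},{2}], ⟨?_, ?_⟩, ?_, ?_⟩
  · intro i; rcases h2cases i with h | h <;> subst h <;> simp
  · intro i a ha
    rcases h2cases i with h | h <;> subst h
    · simp only [Matrix.cons_val_zero, mem_singleton] at ha
      subst ha
      rw [show Function.update ![({0}:Finset (Fin 3)),{1}] 0 {0} = ![{0},{1}] from by
        funext j; rcases h2cases j with h | h <;> subst h <;> simp]
    · simp only [Matrix.cons_val_one, Matrix.head_cons, Matrix.cons_val_zero, mem_insert, mem_singleton] at ha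
      rcases ha with ha | ha <;> subst ha
      · rw [show Function.update ![({0}:Finset (Fin 3)),{1}] 1 {1} = ![{0},{1}] from by
          funext j; rcases h2cases j with h | h <;> subst h <;> simp]
      · rw [show Function.update ![({0}:Finset (Fin 3)),{1}] 1 {2} = ![{0},{2}] from by
          funext j; rcases h2cases j with h | h <;> subst h <;> simp]
        simp only [stdUtil, stdTaskUtil, totalDemand, Fin.sum_univ_two, Fin.sum_univ_three,
          Finset.sum_singleton, Matrix.cons_val_zero, Matrix.cons_val_one, Matrix.head_cons,
          Matrix.cons_val_two, Matrix.tail_cons]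
        norm_num
        exact ⟨Or.inl hM1, Or.inr (by rw [add_comm 1 M])⟩
  · intro i; rcases h2cases i with h | h <;> subst h <;> simp
  · simp only [stdWelfare, stdUtil, stdTaskUtil, totalDemand, Fin.sum_univ_two, Fin.sum_univ_three,
      Finset.sum_singleton, Matrix.cons_val_zero, Matrix.cons_val_one, Matrix.head_cons,
      Matrix.cons_val_two, Matrix.tail_cons]
    norm_num
    rw [min_eq_right (by rw [inv_le_one_iff₀]; right; linarith : (1+M)⁻¹ ≤ 1),
      min_eq_right (by rw [div_le_iff₀ (by linarith : (0:ℝ) < 1+M)]; nlinarith : M/(1+M) ≤ M),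
      min_eq_right hfrac1]
    have hsum : (1+M)⁻¹ + M/(1+M) = 1 := by field_simp
    rw [hsum]
    have h5 : 1 ≤ M*δ := (div_le_iff₀ hδ).mp hMle
    have h7 : 1/(M+1) < δ := by rw [div_lt_iff₀ hMp]; nlinarith
    have h6 : M/(M+1) = 1 - 1/(M+1) := by field_simp; ring
    rw [h6]; linarith
end
end

section
/- In an ordered budget game, if a set C of players changes strategies from state (s,≺) to state (s',≺') — where s'_j = s_j for j ∉ C and the new ordering ≺' keeps the relative order of all tasks not newly chosen and places every newly chosen task after all of them on every resource — then u_j(s',≺') ≥ u_j(s,≺) for every player j ∉ C. -/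
noncomputable section

open Finset

open BudgetGame in
/-- if a set `C` of players changes strategies (newly chosen tasks
appended at the end of every resource order), every player outside `C` weakly
improves. -/
theorem stmt_7 {ι ρ τ : Type*} [Fintype ι] [Fintype ρ] [Fintype τ]
    [DecidableEq ι] [DecidableEq τ]
    (G : BudgetGame ι ρ τ) (s s' : ι → Finset τ) (ord ord' : ρ → τ → ℕ)
    (C : Finset ι)
    (hs : G.Valid s) (hs' : G.Valid s') (hord : InjOrd ord)
    (hfix : ∀ j ∉ C, s' j = s j)
    (hre : IsReorder ord ord' (newTasks C s s')) :
    ∀ j ∉ C, G.ordUtil s ord j ≤ G.ordUtil s' ord' j := by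
  intro j hj
  unfold ordUtil
  rw [show s' j = s j from hfix j hj]
  refine Finset.sum_le_sum fun t ht => Finset.sum_le_sum fun r _ => ?_
  have hto : G.owner t = j := G.strat_owned j (s j) (hs j) t ht
  have htn : t ∉ newTasks C s s' := by
    intro hmem
    obtain ⟨i, hiC, hti⟩ := Finset.mem_biUnion.1 hmem
    have := G.strat_owned i (s' i) (hs' i) t (Finset.mem_sdiff.1 hti).1
    exact hj (by rwa [← hto, this])
  have hpre : G.prefixDemand s' ord' t r ≤ G.prefixDemand s ord t r := by
    refine Finset.sum_le_sum fun i _ => ?_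
    refine Finset.sum_le_sum_of_subset_of_nonneg ?_
      (fun t' _ _ => G.demand_nonneg t' r)
    intro t' ht'
    rw [Finset.mem_filter] at ht' ⊢
    obtain ⟨h1, h2⟩ := ht'
    have htn' : t' ∉ newTasks C s s' := by
      intro hmem
      have := hre.2.2 r t htn t' hmem
      omega
    refine ⟨?_, (hre.2.1 r t' htn' t htn).mp h2⟩
    by_cases hiC : i ∈ C
    · by_contra hnot
      exact htn' (Finset.mem_biUnion.2 ⟨i, hiC, Finset.mem_sdiff.2 ⟨h1, hnot⟩⟩)
    · rwa [← hfix i hiC]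
  unfold ordTaskUtil
  exact min_le_min le_rfl (max_le_max le_rfl (by linarith))

end
end

section
/- In an ordered budget game, the social welfare is a potential function for improvement steps: if a coalition C of players changes strategies from state (s,≺) to state (s',≺') (newly chosen tasks appended at the end of every resource order) and every player in C strictly increases her utility, then u(s',≺') > u(s,≺). In particular this holds for a single improving player (|C| = 1). -/
noncomputable section

open Finset

open BudgetGame in
/-- the social welfare of an ordered budget game is a potential function:
if a (nonempty) coalition `C` changes strategies (new tasks appended at the end of
every resource order) and every member strictly improves, the social welfare strictly
increases; in particular this holds for `|C| = 1`. -/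
theorem stmt_8 {ι ρ τ : Type*} [Fintype ι] [Fintype ρ] [Fintype τ]
    [DecidableEq ι] [DecidableEq τ]
    (G : BudgetGame ι ρ τ) (s s' : ι → Finset τ) (ord ord' : ρ → τ → ℕ)
    (C : Finset ι) (hC : C.Nonempty)
    (hs : G.Valid s) (hs' : G.Valid s') (hord : InjOrd ord)
    (hfix : ∀ j ∉ C, s' j = s j)
    (hre : IsReorder ord ord' (newTasks C s s'))
    (himp : ∀ i ∈ C, G.ordUtil s ord i < G.ordUtil s' ord' i) :
    G.ordWelfare s ord < G.ordWelfare s' ord' := by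
  set newT := newTasks C s s' with hnewT
  -- every new task is owned by a coalition member
  have howner : ∀ t ∈ newT, G.owner t ∈ C := by
    intro t ht
    rw [hnewT, newTasks, Finset.mem_biUnion] at ht
    obtain ⟨i, hi, hti⟩ := ht
    rw [Finset.mem_sdiff] at hti
    rw [G.strat_owned i (s' i) (hs' i) t hti.1]
    exact hi
  -- prefix demand does not increase for old tasks
  have hprefix : ∀ t ∉ newT, ∀ r,
      G.prefixDemand s' ord' t r ≤ G.prefixDemand s ord t r := by
    intro t ht r
    unfold BudgetGame.prefixDemand
    refine Finset.sum_le_sum (fun i _ => ?_)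
    refine Finset.sum_le_sum_of_subset_of_nonneg ?_
      (fun t' _ _ => G.demand_nonneg t' r)
    intro t' ht'
    rw [Finset.mem_filter] at ht' ⊢
    obtain ⟨h1, h2⟩ := ht'
    have hnt' : t' ∉ newT := by
      intro h
      exact absurd h2 (not_lt.2 (le_of_lt (hre.2.2 r t ht t' h)))
    have hsi : t' ∈ s i := by
      by_cases hiC : i ∈ C
      · by_contra hns
        exact hnt' (Finset.mem_biUnion.2 ⟨i, hiC, Finset.mem_sdiff.2 ⟨h1, hns⟩⟩)
      · rwa [hfix i hiC] at h1
    exact ⟨hsi, (hre.2.1 r t' hnt' t ht).1 h2⟩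
  -- task utility does not decrease for old tasks
  have htask : ∀ t ∉ newT, ∀ r,
      G.ordTaskUtil s ord t r ≤ G.ordTaskUtil s' ord' t r := by
    intro t ht r
    unfold BudgetGame.ordTaskUtil
    refine min_le_min le_rfl (max_le_max le_rfl ?_)
    linarith [hprefix t ht r]
  -- players outside the coalition do not lose
  have hout : ∀ j ∉ C, G.ordUtil s ord j ≤ G.ordUtil s' ord' j := by
    intro j hj
    unfold BudgetGame.ordUtil
    rw [hfix j hj]
    refine Finset.sum_le_sum (fun t ht => ?_)
    have htn : t ∉ newT := by
      intro h
      have := howner t h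
      rw [G.strat_owned j (s j) (hs j) t ht] at this
      exact hj this
    exact Finset.sum_le_sum (fun r _ => htask t htn r)
  unfold BudgetGame.ordWelfare
  obtain ⟨i0, hi0⟩ := hC
  refine Finset.sum_lt_sum (fun i _ => ?_) ⟨i0, Finset.mem_univ i0, himp i0 hi0⟩
  by_cases hiC : i ∈ C
  · exact le_of_lt (himp i hiC)
  · exact hout i hiC

end
end

section
/- Every ordered budget game has a state (s,≺) that is a pure Nash equilibrium. -/
noncomputable section

open Finset

namespace BudgetGame
variable {ι ρ τ : Type*} [Fintype ι] [Fintype ρ] [Fintype τ]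
  [DecidableEq ι] [DecidableEq τ]

set_option linter.unusedSectionVars false

lemma greedy_fill (d : τ → ℝ) (hd : ∀ t, 0 ≤ d t)
    (f : τ → ℕ) (hf : Function.Injective f) (B : ℝ) (hB : 0 ≤ B) (S : Finset τ) :
    ∑ t ∈ S, min (d t) (max 0 (B - ∑ t' ∈ S.filter (fun t' => f t' < f t), d t'))
      = min B (∑ t ∈ S, d t) := by
  induction S using Finset.strongInduction with
  | _ S ih =>
    rcases S.eq_empty_or_nonempty with rfl | hS
    · simp [min_eq_right hB]
    · obtain ⟨m, hm, hmax⟩ := S.exists_max_image f hS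
      have hins : S = insert m (S.erase m) := (Finset.insert_erase hm).symm
      have herase : ∀ t ∈ S.erase m,
          S.filter (fun t' => f t' < f t) = (S.erase m).filter (fun t' => f t' < f t) := by
        intro t ht
        ext t'
        simp only [mem_filter, mem_erase]
        constructor
        · rintro ⟨h1, h2⟩
          refine ⟨⟨?_, h1⟩, h2⟩
          rintro rfl
          exact absurd (hmax t (Finset.mem_of_mem_erase ht)) (not_le_of_gt h2)
        · rintro ⟨⟨_, h1⟩, h2⟩; exact ⟨h1, h2⟩
      have hmfil : S.filter (fun t' => f t' < f m) = S.erase m := by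
        ext t'
        simp only [mem_filter, mem_erase]
        constructor
        · rintro ⟨h1, h2⟩; exact ⟨fun h => by subst h; exact lt_irrefl _ h2, h1⟩
        · rintro ⟨h1, h2⟩
          refine ⟨h2, lt_of_le_of_ne (hmax t' h2) (fun h => h1 (hf h))⟩
      rw [hins, Finset.sum_insert (Finset.notMem_erase m S),
          Finset.sum_insert (Finset.notMem_erase m S)]
      rw [← hins, hmfil]
      have hrest : ∑ t ∈ S.erase m,
          min (d t) (max 0 (B - ∑ t' ∈ S.filter (fun t' => f t' < f t), d t'))
          = min B (∑ t ∈ S.erase m, d t) := by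
        rw [Finset.sum_congr rfl (fun t ht => by rw [herase t ht])]
        exact ih (S.erase m) (Finset.erase_ssubset hm)
      rw [hrest]
      have hP : 0 ≤ ∑ t ∈ S.erase m, d t := Finset.sum_nonneg fun t _ => hd t
      have hdm := hd m
      set P := ∑ t ∈ S.erase m, d t
      rcases le_total B P with h | h
      · rcases le_total (d m) (B - P) with h2 | h2 <;>
        · simp only [min_def, max_def]; split_ifs <;> linarith
      · simp only [min_def, max_def]; split_ifs <;> linarith

/-- The set of all chosen tasks. -/
def chosen (s : ι → Finset τ) : Finset τ := Finset.univ.biUnion s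

lemma valid_disjoint (G : BudgetGame ι ρ τ) {s : ι → Finset τ} (hs : G.Valid s) :
    ((Finset.univ : Finset ι) : Set ι).PairwiseDisjoint s := by
  intro i _ j _ hij
  simp only [Function.onFun]
  rw [Finset.disjoint_left]
  intro t hti htj
  exact hij ((G.strat_owned i (s i) (hs i) t hti).symm.trans
    (G.strat_owned j (s j) (hs j) t htj))

lemma sum_chosen (G : BudgetGame ι ρ τ) {s : ι → Finset τ} (hs : G.Valid s)
    (g : τ → ℝ) : ∑ i, ∑ t ∈ s i, g t = ∑ t ∈ chosen s, g t :=
  (Finset.sum_biUnion (G.valid_disjoint hs)).symm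

lemma prefixDemand_eq (G : BudgetGame ι ρ τ) {s : ι → Finset τ} (hs : G.Valid s)
    (ord : ρ → τ → ℕ) (t : τ) (r : ρ) :
    G.prefixDemand s ord t r
      = ∑ t' ∈ (chosen s).filter (fun t' => ord r t' < ord r t), G.demand t' r := by
  unfold prefixDemand
  rw [show (chosen s).filter (fun t' => ord r t' < ord r t)
      = Finset.univ.biUnion (fun i => (s i).filter (fun t' => ord r t' < ord r t)) by
      ext x; simp [chosen, Finset.mem_filter, Finset.mem_biUnion, and_comm]]
  refine (Finset.sum_biUnion ?_).symm
  intro i _ j _ hij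
  refine Finset.disjoint_filter_filter ?_
  have := G.valid_disjoint hs (Finset.mem_univ i) (Finset.mem_univ j) hij
  simpa [Function.onFun] using this

lemma totalDemand_eq (G : BudgetGame ι ρ τ) {s : ι → Finset τ} (hs : G.Valid s)
    (r : ρ) : G.totalDemand s r = ∑ t ∈ chosen s, G.demand t r :=
  G.sum_chosen hs _

lemma welfare_eq (G : BudgetGame ι ρ τ) {s : ι → Finset τ} (hs : G.Valid s)
    {ord : ρ → τ → ℕ} (hord : InjOrd ord) :
    G.ordWelfare s ord = ∑ r, min (G.budget r) (G.totalDemand s r) := by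
  unfold ordWelfare ordUtil
  rw [show (∑ i, ∑ t ∈ s i, ∑ r, G.ordTaskUtil s ord t r)
      = ∑ t ∈ chosen s, ∑ r, G.ordTaskUtil s ord t r from G.sum_chosen hs _]
  rw [Finset.sum_comm]
  refine Finset.sum_congr rfl fun r _ => ?_
  rw [totalDemand_eq G hs]
  have := greedy_fill (fun t => G.demand t r) (fun t => G.demand_nonneg t r)
    (ord r) (hord r) (G.budget r) (G.budget_pos r).le (chosen s)
  rw [← this]
  refine Finset.sum_congr rfl fun t _ => ?_
  unfold ordTaskUtil
  rw [prefixDemand_eq G hs]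

lemma others_le (G : BudgetGame ι ρ τ) {s : ι → Finset τ} (hs : G.Valid s)
    {i : ι} {a : Finset τ} (ha : a ∈ G.strat i) {ord ord' : ρ → τ → ℕ}
    (hre : IsReorder ord ord' (a \ s i)) {j : ι} (hj : j ≠ i) :
    G.ordUtil s ord j ≤ G.ordUtil (Function.update s i a) ord' j := by
  obtain ⟨hinj', hkeep, happ⟩ := hre
  unfold ordUtil
  rw [Function.update_of_ne hj]
  refine Finset.sum_le_sum fun t ht => Finset.sum_le_sum fun r _ => ?_
  have htnew : t ∉ a \ s i := by
    intro hmem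
    exact hj ((G.strat_owned j (s j) (hs j) t ht).symm.trans
      (G.strat_owned i a ha t (Finset.mem_sdiff.mp hmem).1))
  have hpre : G.prefixDemand (Function.update s i a) ord' t r
      ≤ G.prefixDemand s ord t r := by
    unfold prefixDemand
    refine Finset.sum_le_sum fun k _ => ?_
    refine Finset.sum_le_sum_of_subset_of_nonneg ?_
      (fun t' _ _ => G.demand_nonneg t' r)
    intro t' ht'
    simp only [Finset.mem_filter] at ht' ⊢
    obtain ⟨ht'mem, ht'lt⟩ := ht'
    have ht'new : t' ∉ a \ s i := by
      intro hmem
      exact absurd (happ r t htnew t' hmem) (lt_asymm ht'lt)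
    refine ⟨?_, (hkeep r t' ht'new t htnew).mp ht'lt⟩
    by_cases hk : k = i
    · subst hk
      rw [Function.update_self] at ht'mem
      by_contra hne
      exact ht'new (Finset.mem_sdiff.mpr ⟨ht'mem, hne⟩)
    · rwa [Function.update_of_ne hk] at ht'mem
  unfold ordTaskUtil
  exact min_le_min le_rfl (max_le_max le_rfl (by linarith))

end BudgetGame


open BudgetGame in
/-- every ordered budget game has a state `(s,≺)` that is a pure Nash
equilibrium. -/
theorem stmt_9 {ι ρ τ : Type*} [Fintype ι] [Fintype ρ] [Fintype τ]
    [DecidableEq ι] [DecidableEq τ] (G : BudgetGame ι ρ τ) :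
    ∃ (s : ι → Finset τ) (ord : ρ → τ → ℕ), G.ordNE s ord := by
  classical
  set Φ : (ι → Finset τ) → ℝ := fun s => ∑ r, min (G.budget r) (G.totalDemand s r) with hΦ
  have hV : (Fintype.piFinset G.strat).Nonempty := by
    rw [Fintype.piFinset_nonempty]
    exact G.strat_nonempty
  obtain ⟨s, hsV, hsmax⟩ := Finset.exists_max_image (Fintype.piFinset G.strat) Φ hV
  have hsvalid : G.Valid s := fun i => (Fintype.mem_piFinset.mp hsV) i
  set ord : ρ → τ → ℕ := fun _ t => ((Fintype.equivFin τ) t : ℕ) with hord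
  have hinj : InjOrd ord := fun r => Fin.val_injective.comp (Fintype.equivFin τ).injective
  refine ⟨s, ord, hsvalid, hinj, ?_⟩
  intro i a ha ord' hre
  set s' := Function.update s i a with hs'
  have hs'valid : G.Valid s' := by
    intro k
    by_cases hk : k = i
    · subst hk; simpa [s'] using ha
    · simpa [s', Function.update_of_ne hk] using hsvalid k
  have hΦle : Φ s' ≤ Φ s := hsmax s' (Fintype.mem_piFinset.mpr hs'valid)
  have hW' : G.ordWelfare s' ord' = Φ s' := G.welfare_eq hs'valid hre.1
  have hW : G.ordWelfare s ord = Φ s := G.welfare_eq hsvalid hinj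
  have hsplit : ∀ (u : ι → ℝ), ∑ j, u j = u i + ∑ j ∈ Finset.univ.erase i, u j :=
    fun u => (Finset.add_sum_erase _ u (Finset.mem_univ i)).symm
  have h1 : G.ordWelfare s' ord' = G.ordUtil s' ord' i
      + ∑ j ∈ Finset.univ.erase i, G.ordUtil s' ord' j := hsplit _
  have h2 : G.ordWelfare s ord = G.ordUtil s ord i
      + ∑ j ∈ Finset.univ.erase i, G.ordUtil s ord j := hsplit _
  have hothers : ∑ j ∈ Finset.univ.erase i, G.ordUtil s ord j
      ≤ ∑ j ∈ Finset.univ.erase i, G.ordUtil s' ord' j :=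
    Finset.sum_le_sum fun j hjmem =>
      G.others_le hsvalid ha hre (Finset.mem_erase.mp hjmem).1
  linarith


end
end

section
/- In an ordered budget game, insert the players 1,…,n one after another, where each inserted player i chooses a strategy maximizing her utility against the strategies already chosen by players 1,…,i−1, and at insertion each of her chosen tasks is appended at the end of every resource's order. Then the resulting state (s,≺) is a strong equilibrium: no coalition C ⊆ N of players can jointly change strategies (newly chosen tasks appended at the end of every resource order) so that every member of C strictly increases her utility. In particular, every ordered budget game has a strong equilibrium. -/
noncomputable section

open Finset

open BudgetGame in
/-- The profile in which players `j < i` play `s j`, player `i` plays `a` and the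
players after `i` have not been inserted yet. -/
def partialProf {n : ℕ} {τ : Type*} [DecidableEq τ]
    (s : Fin n → Finset τ) (i : Fin n) (a : Finset τ) : Fin n → Finset τ :=
  fun j => if j < i then s j else if j = i then a else ∅

namespace BudgetGame

variable {ι ρ τ : Type*} [Fintype ι] [Fintype ρ] [Fintype τ]
  [DecidableEq ι] [DecidableEq τ]

lemma prefixDemand_mono (G : BudgetGame ι ρ τ) {s₁ s₂ : ι → Finset τ}
    (h : ∀ j, s₁ j ⊆ s₂ j) (ord : ρ → τ → ℕ) (t : τ) (r : ρ) :
    G.prefixDemand s₁ ord t r ≤ G.prefixDemand s₂ ord t r := by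
  refine Finset.sum_le_sum fun j _ => ?_
  refine Finset.sum_le_sum_of_subset_of_nonneg
    (Finset.filter_subset_filter _ (h j)) fun t' _ _ => G.demand_nonneg t' r

lemma ordUtil_anti (G : BudgetGame ι ρ τ) {s₁ s₂ : ι → Finset τ}
    (h : ∀ j, s₁ j ⊆ s₂ j) (ord : ρ → τ → ℕ) (i : ι) (hi : s₁ i = s₂ i) :
    G.ordUtil s₂ ord i ≤ G.ordUtil s₁ ord i := by
  unfold ordUtil
  rw [← hi]
  refine Finset.sum_le_sum fun t _ => Finset.sum_le_sum fun r _ => ?_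
  unfold ordTaskUtil
  refine min_le_min le_rfl (max_le_max le_rfl ?_)
  have := G.prefixDemand_mono h ord t r
  linarith

lemma ordUtil_congr (G : BudgetGame ι ρ τ) {s₁ s₂ : ι → Finset τ}
    {ord₁ ord₂ : ρ → τ → ℕ} {i : ι} (hi : s₁ i = s₂ i)
    (h : ∀ t ∈ s₁ i, ∀ r, G.prefixDemand s₁ ord₁ t r = G.prefixDemand s₂ ord₂ t r) :
    G.ordUtil s₁ ord₁ i = G.ordUtil s₂ ord₂ i := by
  unfold ordUtil
  rw [← hi]
  refine Finset.sum_congr rfl fun t ht => Finset.sum_congr rfl fun r _ => ?_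
  unfold ordTaskUtil
  rw [h t ht r]

end BudgetGame

open BudgetGame in
/-- insert the players `0,…,n−1` one after another, each inserted player
`i` choosing a strategy maximizing her utility against the strategies of the players
inserted before her, her chosen tasks being appended at the end of every resource's
order (so in the resulting order the chosen tasks of earlier players precede those of
later players).  The resulting state `(s,≺)` is a strong equilibrium; in particular,
every ordered budget game has a strong equilibrium. -/
theorem stmt_10 {n : ℕ} {ρ τ : Type*} [Fintype ρ] [Fintype τ] [DecidableEq τ]
    (G : BudgetGame (Fin n) ρ τ) (s : Fin n → Finset τ) (ord : ρ → τ → ℕ)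
    (hs : G.Valid s) (hord : InjOrd ord)
    (horder : ∀ (r : ρ) (i j : Fin n), i < j →
      ∀ t ∈ s i, ∀ t' ∈ s j, ord r t < ord r t')
    (hbest : ∀ i : Fin n, ∀ a ∈ G.strat i, ∀ orda : ρ → τ → ℕ,
      IsReorder ord orda a →
      G.ordUtil (partialProf s i a) orda i ≤ G.ordUtil (partialProf s i (s i)) ord i) :
    G.IsStrongEq s ord ∧
    ∃ (s₂ : Fin n → Finset τ) (ord₂ : ρ → τ → ℕ), G.IsStrongEq s₂ ord₂ := by
  have key : G.IsStrongEq s ord := by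
    refine ⟨hs, hord, ?_⟩
    rintro ⟨C, s', ord', hCne, hs', hfix, ⟨hinj', hkeep, happ⟩, himp⟩
    set i := C.min' hCne with hidef
    have hiC : i ∈ C := C.min'_mem hCne
    have hmin : ∀ j ∈ C, i ≤ j := fun j hj => C.min'_le j hj
    have hlt : ∀ j, j < i → s' j = s j := fun j hj =>
      hfix j (fun hjC => absurd (hmin j hjC) (not_le.mpr hj))
    set a := s' i with hadef
    have ha : a ∈ G.strat i := hs' i
    -- ownership facts
    have hown_s : ∀ j, ∀ t ∈ s j, G.owner t = j := fun j t ht =>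
      G.strat_owned j (s j) (hs j) t ht
    have hown_s' : ∀ j, ∀ t ∈ s' j, G.owner t = j := fun j t ht =>
      G.strat_owned j (s' j) (hs' j) t ht
    -- tasks of earlier players are not new
    have hnotnew : ∀ j, j < i → ∀ t' ∈ s j, t' ∉ newTasks C s s' := by
      intro j hj t' ht' hmem
      rcases Finset.mem_biUnion.mp hmem with ⟨k, hkC, hk⟩
      have h1 : G.owner t' = k := hown_s' k t' (Finset.mem_sdiff.mp hk).1
      have h2 : G.owner t' = j := hown_s j t' ht'
      have hjk : j = k := h2.symm.trans h1
      exact absurd (hjk ▸ hmin k hkC) (not_le.mpr hj)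
    -- old tasks of player i are not new
    have hnotnew_i : ∀ t ∈ s i, t ∉ newTasks C s s' := by
      intro t ht hmem
      rcases Finset.mem_biUnion.mp hmem with ⟨k, hkC, hk⟩
      rcases Finset.mem_sdiff.mp hk with ⟨hk1, hk2⟩
      have h1 : G.owner t = k := hown_s' k t hk1
      have h2 : G.owner t = i := hown_s i t ht
      have hki : k = i := h1.symm.trans h2
      exact hk2 (by rw [hki]; exact ht)
    -- tasks of earlier players are not in a
    have hnota : ∀ j, j < i → ∀ t' ∈ s j, t' ∉ a := by
      intro j hj t' ht' hmem
      have h1 : G.owner t' = i := hown_s' i t' hmem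
      have h2 : G.owner t' = j := hown_s j t' ht'
      have : j = i := h2.symm.trans h1
      exact absurd this (ne_of_lt hj)
    -- the appended ordering
    set orda : ρ → τ → ℕ := fun r t =>
      if t ∈ a then (Finset.univ.sup (ord r)) + 1 + ord' r t else ord r t with hordadef
    have horda_lt : ∀ r, ∀ x ∉ a, ∀ t ∈ a, orda r x < orda r t := by
      intro r x hx t ht
      simp only [hordadef, if_neg hx, if_pos ht]
      have : ord r x ≤ Finset.univ.sup (ord r) := Finset.le_sup (Finset.mem_univ x)
      omega
    have hreorder : IsReorder ord orda a := by
      refine ⟨?_, ?_, horda_lt⟩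
      · intro r x y hxy
        by_cases hx : x ∈ a <;> by_cases hy : y ∈ a
        · simp only [hordadef, if_pos hx, if_pos hy] at hxy
          exact hinj' r (by omega)
        · exact absurd hxy.symm (Nat.ne_of_lt (horda_lt r y hy x hx))
        · exact absurd hxy (Nat.ne_of_lt (horda_lt r x hx y hy))
        · simp only [hordadef, if_neg hx, if_neg hy] at hxy
          exact hord r hxy
      · intro r x hx y hy
        simp only [hordadef, if_neg hx, if_neg hy]
    -- in (s',ord'), every task of an earlier player precedes every task in a
    have hbefore' : ∀ r, ∀ j, j < i → ∀ t' ∈ s j, ∀ t ∈ a, ord' r t' < ord' r t := by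
      intro r j hj t' ht' t ht
      by_cases hts : t ∈ s i
      · have h1 : t ∉ newTasks C s s' := hnotnew_i t hts
        have h2 : t' ∉ newTasks C s s' := hnotnew j hj t' ht'
        exact (hkeep r t' h2 t h1).mpr (horder r j i hj t' ht' t hts)
      · have h1 : t ∈ newTasks C s s' :=
          Finset.mem_biUnion.mpr ⟨i, hiC, Finset.mem_sdiff.mpr ⟨ht, hts⟩⟩
        exact happ r t' (hnotnew j hj t' ht') t h1
    set p' := partialProf s i a with hp'def
    set p := partialProf s i (s i) with hpdef
    have hp'i : p' i = a := by simp [hp'def, partialProf]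
    have hpi : p i = s i := by simp [hpdef, partialProf]
    -- step 1 : utility in (s',ord') ≤ utility in (p',ord')
    have h1 : G.ordUtil s' ord' i ≤ G.ordUtil p' ord' i := by
      refine G.ordUtil_anti (fun j => ?_) ord' i hp'i
      simp only [hp'def, partialProf]
      rcases lt_trichotomy j i with h | h | h
      · simp [h, hlt j h]
      · simp [h]; exact Finset.Subset.refl _
      · simp [not_lt.mpr (le_of_lt h), (ne_of_gt h : j ≠ i)]
    -- step 2 : equal prefix demands under ord' and orda in p'
    have h2 : G.ordUtil p' ord' i = G.ordUtil p' orda i := by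
      refine G.ordUtil_congr rfl fun t ht r => ?_
      rw [hp'i] at ht
      refine Finset.sum_congr rfl fun j _ => ?_
      congr 1
      refine Finset.filter_congr fun t' ht' => ?_
      rcases lt_trichotomy j i with h | h | h
      · have ht's : t' ∈ s j := by
          simpa [hp'def, partialProf, h] using ht'
        have hL : ord' r t' < ord' r t := hbefore' r j h t' ht's t ht
        have hR : orda r t' < orda r t := horda_lt r t' (hnota j h t' ht's) t ht
        simp [hL, hR]
      · have ht'a : t' ∈ a := by
          simpa [hp'def, partialProf, h] using ht'
        simp only [hordadef, if_pos ht'a, if_pos ht]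
        constructor <;> intro <;> omega
      · exfalso
        simp [hp'def, partialProf, not_lt.mpr (le_of_lt h), (ne_of_gt h : j ≠ i)] at ht'
    -- step 3 : best response
    have h3 : G.ordUtil p' orda i ≤ G.ordUtil p ord i := hbest i a ha orda hreorder
    -- step 4 : utility in (p,ord) = utility in (s,ord)
    have h4 : G.ordUtil p ord i = G.ordUtil s ord i := by
      refine G.ordUtil_congr hpi fun t ht r => ?_
      rw [hpi] at ht
      refine Finset.sum_congr rfl fun j _ => ?_
      rcases lt_trichotomy j i with h | h | h
      · have : p j = s j := by simp [hpdef, partialProf, h]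
        rw [this]
      · have : p j = s j := by simp [hpdef, partialProf, h]
        rw [this]
      · have hpj : p j = (∅ : Finset τ) := by
          simp [hpdef, partialProf, not_lt.mpr (le_of_lt h), (ne_of_gt h : j ≠ i)]
        have hsj : (s j).filter (fun t' => ord r t' < ord r t) = ∅ := by
          refine Finset.filter_eq_empty_iff.mpr fun t' ht' => ?_
          exact not_lt.mpr (le_of_lt (horder r i j h t ht t' ht'))
        rw [hpj, hsj]
        simp
    have h5 : G.ordUtil s ord i < G.ordUtil s' ord' i := himp i hiC
    linarith
  exact ⟨key, s, ord, key⟩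

end
end

section
/- In an ordered budget game, let (s,≺) be any state whose strategy profile s maximizes the social welfare over all strategy profiles. Then (s,≺) is a super strong equilibrium: no coalition C of players can jointly change strategies (newly chosen tasks appended at the end of every resource order) so that every member of C weakly increases her utility and at least one member strictly increases it. In particular s is a pure Nash equilibrium, so the price of stability and the price of super strong stability of ordered budget games equal 1. -/
noncomputable section

open Finset

namespace BudgetGame

variable {ι ρ τ : Type*} [Fintype ι] [Fintype ρ] [Fintype τ]
  [DecidableEq ι] [DecidableEq τ]

lemma owner_mem_of_mem_newTasks (G : BudgetGame ι ρ τ)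
    {C : Finset ι} {s s' : ι → Finset τ} (hs' : G.Valid s')
    {t : τ} (ht : t ∈ newTasks C s s') : G.owner t ∈ C := by
  obtain ⟨i, hi, hti⟩ := Finset.mem_biUnion.mp ht
  rw [G.strat_owned i (s' i) (hs' i) t (Finset.mem_sdiff.mp hti).1]
  exact hi

lemma prefix_mono (G : BudgetGame ι ρ τ)
    {C : Finset ι} {s s' : ι → Finset τ} {ord ord' : ρ → τ → ℕ}
    (hfix : ∀ j ∉ C, s' j = s j)
    (hre : IsReorder ord ord' (newTasks C s s'))
    {t : τ} (ht : t ∉ newTasks C s s') (r : ρ) :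
    G.prefixDemand s' ord' t r ≤ G.prefixDemand s ord t r := by
  unfold prefixDemand
  refine Finset.sum_le_sum fun i _ => ?_
  refine Finset.sum_le_sum_of_subset_of_nonneg ?_
    (fun t' _ _ => G.demand_nonneg t' r)
  intro t' ht'
  rw [Finset.mem_filter] at ht' ⊢
  obtain ⟨hmem, hlt⟩ := ht'
  have hnew : t' ∉ newTasks C s s' := by
    intro hn
    exact absurd (hre.2.2 r t ht t' hn) (by omega)
  have hsi : t' ∈ s i := by
    by_cases hiC : i ∈ C
    · by_contra hns
      exact hnew (Finset.mem_biUnion.mpr ⟨i, hiC, Finset.mem_sdiff.mpr ⟨hmem, hns⟩⟩)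
    · rwa [hfix i hiC] at hmem
  exact ⟨hsi, (hre.2.1 r t' hnew t ht).mp hlt⟩

lemma util_mono_nonmember (G : BudgetGame ι ρ τ)
    {C : Finset ι} {s s' : ι → Finset τ} {ord ord' : ρ → τ → ℕ}
    (hs : G.Valid s) (hs' : G.Valid s')
    (hfix : ∀ j ∉ C, s' j = s j)
    (hre : IsReorder ord ord' (newTasks C s s'))
    {j : ι} (hj : j ∉ C) :
    G.ordUtil s ord j ≤ G.ordUtil s' ord' j := by
  unfold ordUtil
  rw [hfix j hj]
  refine Finset.sum_le_sum fun t htj => Finset.sum_le_sum fun r _ => ?_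
  have ht : t ∉ newTasks C s s' := fun hn => hj (by
    have := G.owner_mem_of_mem_newTasks hs' hn
    rwa [G.strat_owned j (s j) (hs j) t htj] at this)
  have hP := G.prefix_mono hfix hre ht r
  unfold ordTaskUtil
  exact min_le_min le_rfl (max_le_max le_rfl (by linarith))

end BudgetGame

open BudgetGame in
/-- any state `(s,≺)` whose strategy profile maximizes the (order
independent) social welfare is a super strong equilibrium, and in particular a pure
Nash equilibrium; hence the price of (super strong) stability of ordered budget games
is `1`. -/
theorem stmt_11 {ι ρ τ : Type*} [Fintype ι] [Fintype ρ] [Fintype τ]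
    [DecidableEq ι] [DecidableEq τ]
    (G : BudgetGame ι ρ τ) (s : ι → Finset τ) (ord : ρ → τ → ℕ)
    (hs : G.Valid s) (hord : InjOrd ord)
    (hopt : ∀ s' : ι → Finset τ, G.Valid s' → ∀ ord' : ρ → τ → ℕ, InjOrd ord' →
      G.ordWelfare s' ord' ≤ G.ordWelfare s ord) :
    G.IsSuperStrongEq s ord ∧ G.ordNE s ord := by
  have hSSE : G.IsSuperStrongEq s ord := by
    refine ⟨hs, hord, ?_⟩
    rintro ⟨C, s', ord', -, hs', hfix, hre, hweak, i0, hi0, hstrict⟩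
    have hall : ∀ i, G.ordUtil s ord i ≤ G.ordUtil s' ord' i := by
      intro i
      by_cases hiC : i ∈ C
      · exact hweak i hiC
      · exact G.util_mono_nonmember hs hs' hfix hre hiC
    have hlt : G.ordWelfare s ord < G.ordWelfare s' ord' :=
      Finset.sum_lt_sum (fun i _ => hall i) ⟨i0, Finset.mem_univ i0, hstrict⟩
    exact absurd (hopt s' hs' ord' hre.1) (not_le.mpr hlt)
  refine ⟨hSSE, hs, hord, ?_⟩
  intro i a ha ord' hre
  by_contra hlt
  push_neg at hlt
  apply hSSE.2.2
  have hnew : newTasks {i} s (Function.update s i a) = a \ s i := by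
    simp [newTasks]
  refine ⟨{i}, Function.update s i a, ord', ⟨i, Finset.mem_singleton_self i⟩, ?_, ?_, ?_, ?_, ?_⟩
  · intro j
    by_cases hj : j = i
    · subst hj; simpa using ha
    · simpa [Function.update_of_ne hj] using hs j
  · intro j hj
    rw [Finset.mem_singleton] at hj
    simp [Function.update_of_ne hj]
  · rwa [hnew]
  · intro j hj
    rw [Finset.mem_singleton] at hj
    subst hj
    exact hlt.le
  · exact ⟨i, Finset.mem_singleton_self i, hlt⟩

end
end

section
/- For every ordered budget game, the price of anarchy is at most 2: if (s,≺) is a pure Nash equilibrium, then every strategy profile s* satisfies u(s*) ≤ 2·u(s,≺), where the social welfare of s* may be computed with respect to any ordering since it is order-independent. -/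
noncomputable section

open Finset

lemma poa_min_max_step (b d D : ℝ) (hd : 0 ≤ d) (hD : 0 ≤ D) (hb : 0 ≤ b) :
    min d (max 0 (b - D)) + min b D = min b (D + d) := by
  simp only [min_def, max_def]
  split_ifs <;> linarith

lemma poa_min_shift (b x y a : ℝ) (hxy : x ≤ y) (ha : 0 ≤ a) :
    min b (y + a) - min b y ≤ min b (x + a) - min b x := by
  simp only [min_def]
  split_ifs <;> linarith

lemma poa_min_subadd {ι : Type*} [DecidableEq ι] (b D : ℝ) (hD : 0 ≤ D)
    (S : Finset ι) (A : ι → ℝ) (hA : ∀ i, 0 ≤ A i) :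
    min b (D + ∑ i ∈ S, A i) - min b D ≤ ∑ i ∈ S, (min b (D + A i) - min b D) := by
  induction S using Finset.induction_on with
  | empty => simp
  | @insert a S haS ih =>
    rw [Finset.sum_insert haS, Finset.sum_insert haS]
    have hT : 0 ≤ ∑ i ∈ S, A i := Finset.sum_nonneg fun i _ => hA i
    have key : min b (D + (A a + ∑ i ∈ S, A i)) + min b D
        ≤ min b (D + A a) + min b (D + ∑ i ∈ S, A i) := by
      have := hA a
      simp only [min_def]
      split_ifs <;> linarith
    linarith

lemma poa_key_min_sum {τ : Type*} [DecidableEq τ] (b : ℝ) (hb : 0 ≤ b)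
    (d : τ → ℝ) (hd : ∀ t, 0 ≤ d t) (f : τ → ℕ) (hf : Function.Injective f)
    (S : Finset τ) :
    ∑ t ∈ S, min (d t) (max 0 (b - ∑ t' ∈ S.filter (fun t' => f t' < f t), d t'))
      = min b (∑ t ∈ S, d t) := by
  induction S using Finset.strongInduction with
  | _ S ih =>
    rcases S.eq_empty_or_nonempty with rfl | hS
    · simp [min_eq_right hb]
    · obtain ⟨t₀, ht₀S, ht₀max⟩ := S.exists_max_image f hS
      have hlt : ∀ t ∈ S.erase t₀, f t < f t₀ := by
        intro t ht
        obtain ⟨hne, htS⟩ := Finset.mem_erase.mp ht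
        exact lt_of_le_of_ne (ht₀max t htS) (fun h => hne (hf h))
      have hfe : ∀ t ∈ S.erase t₀,
          S.filter (fun t' => f t' < f t) = (S.erase t₀).filter (fun t' => f t' < f t) := by
        intro t ht
        ext t'
        simp only [Finset.mem_filter, Finset.mem_erase]
        constructor
        · rintro ⟨ht'S, hlt'⟩
          refine ⟨⟨?_, ht'S⟩, hlt'⟩
          rintro rfl
          exact absurd (hlt t ht) (by omega)
        · rintro ⟨⟨_, ht'S⟩, hlt'⟩; exact ⟨ht'S, hlt'⟩
      have hft₀ : S.filter (fun t' => f t' < f t₀) = S.erase t₀ := by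
        ext t'
        simp only [Finset.mem_filter, Finset.mem_erase]
        constructor
        · rintro ⟨ht'S, hlt'⟩
          exact ⟨fun h => by subst h; omega, ht'S⟩
        · rintro ⟨hne, ht'S⟩
          exact ⟨ht'S, lt_of_le_of_ne (ht₀max t' ht'S) (fun h => hne (hf h))⟩
      rw [← Finset.add_sum_erase _ _ ht₀S, ← Finset.add_sum_erase _ _ ht₀S]
      have hsum : ∑ t ∈ S.erase t₀,
          min (d t) (max 0 (b - ∑ t' ∈ S.filter (fun t' => f t' < f t), d t'))
          = min b (∑ t ∈ S.erase t₀, d t) := by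
        rw [Finset.sum_congr rfl fun t ht => by rw [hfe t ht]]
        exact ih (S.erase t₀) (Finset.erase_ssubset ht₀S)
      rw [hsum, hft₀, show d t₀ + ∑ x ∈ S.erase t₀, d x
        = (∑ x ∈ S.erase t₀, d x) + d t₀ from add_comm _ _]
      exact poa_min_max_step b (d t₀) _ (hd t₀)
        (Finset.sum_nonneg fun t _ => hd t) hb

section PoAAux

open BudgetGame

variable {ι ρ τ : Type*} [Fintype ι] [Fintype ρ] [Fintype τ]
  [DecidableEq ι] [DecidableEq τ]

lemma poa_sum_biUnion (s : ι → Finset τ) (own : τ → ι)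
    (hOwn : ∀ i, ∀ t ∈ s i, own t = i) (g : τ → ℝ) :
    ∑ t ∈ Finset.univ.biUnion s, g t = ∑ i, ∑ t ∈ s i, g t := by
  rw [Finset.sum_biUnion]
  intro i _ j _ hij
  simp only [Function.onFun, Finset.disjoint_left]
  intro t hti htj
  exact hij ((hOwn i t hti).symm.trans (hOwn j t htj))

lemma poa_util_nonneg (G : BudgetGame ι ρ τ) (s : ι → Finset τ) (ord : ρ → τ → ℕ)
    (t : τ) (r : ρ) : 0 ≤ G.ordTaskUtil s ord t r :=
  le_min (G.demand_nonneg t r) (le_max_left _ _)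

lemma poa_resource_sum (G : BudgetGame ι ρ τ) (s : ι → Finset τ) (ord : ρ → τ → ℕ)
    (hOwn : ∀ i, ∀ t ∈ s i, G.owner t = i) (hord : InjOrd ord) (r : ρ) :
    ∑ i, ∑ t ∈ s i, G.ordTaskUtil s ord t r = min (G.budget r) (G.totalDemand s r) := by
  have hpre : ∀ t, G.prefixDemand s ord t r
      = ∑ t' ∈ (Finset.univ.biUnion s).filter (fun t' => ord r t' < ord r t),
          G.demand t' r := by
    intro t
    rw [Finset.filter_biUnion,
      poa_sum_biUnion _ G.owner
        (fun i t' ht' => hOwn i t' (Finset.mem_filter.mp ht').1)]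
    rfl
  have h1 : ∑ i, ∑ t ∈ s i, G.ordTaskUtil s ord t r
      = ∑ t ∈ Finset.univ.biUnion s, G.ordTaskUtil s ord t r :=
    (poa_sum_biUnion s G.owner hOwn _).symm
  have h2 : G.totalDemand s r = ∑ t ∈ Finset.univ.biUnion s, G.demand t r :=
    (poa_sum_biUnion s G.owner hOwn _).symm
  rw [h1, h2]
  have hkey := poa_key_min_sum (G.budget r) (G.budget_pos r).le
    (fun t => G.demand t r) (fun t => G.demand_nonneg t r) (ord r) (hord r)
    (Finset.univ.biUnion s)
  rw [← hkey]
  refine Finset.sum_congr rfl fun t _ => ?_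
  unfold BudgetGame.ordTaskUtil
  rw [hpre t]

lemma poa_welfare (G : BudgetGame ι ρ τ) (s : ι → Finset τ) (ord : ρ → τ → ℕ)
    (hOwn : ∀ i, ∀ t ∈ s i, G.owner t = i) (hord : InjOrd ord) :
    G.ordWelfare s ord = ∑ r, min (G.budget r) (G.totalDemand s r) := by
  unfold BudgetGame.ordWelfare BudgetGame.ordUtil
  rw [Finset.sum_congr rfl (fun i _ => Finset.sum_comm), Finset.sum_comm]
  exact Finset.sum_congr rfl fun r _ => poa_resource_sum G s ord hOwn hord r

lemma poa_exists_reorder (ord : ρ → τ → ℕ) (hord : InjOrd ord) (newT : Finset τ) :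
    ∃ ord', IsReorder ord ord' newT := by
  classical
  refine ⟨fun r t => if t ∈ newT then Finset.univ.sup (ord r) + 1 + ord r t
    else ord r t, ?_, ?_, ?_⟩
  · intro r x y h
    by_cases hx : x ∈ newT <;> by_cases hy : y ∈ newT <;> simp only [hx, hy,
      if_true, if_false] at h
    · exact hord r (by omega)
    · have := Finset.le_sup (f := ord r) (Finset.mem_univ y); omega
    · have := Finset.le_sup (f := ord r) (Finset.mem_univ x); omega
    · exact hord r h
  · intro r x hx y hy; simp [hx, hy]
  · intro r x hx t ht
    simp only [if_neg hx, if_pos ht]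
    have := Finset.le_sup (f := ord r) (Finset.mem_univ x); omega

end PoAAux

open BudgetGame in
/-- for every ordered budget game the price of anarchy is at most `2`:
if `(s,≺)` is a pure Nash equilibrium then every strategy profile `s*` satisfies
`u(s*) ≤ 2·u(s,≺)` (the welfare of `s*` being computed with respect to any ordering,
as it is order-independent). -/
theorem stmt_13 {ι ρ τ : Type*} [Fintype ι] [Fintype ρ] [Fintype τ]
    [DecidableEq ι] [DecidableEq τ]
    (G : BudgetGame ι ρ τ) (s : ι → Finset τ) (ord : ρ → τ → ℕ)
    (hNE : G.ordNE s ord)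
    (sstar : ι → Finset τ) (hstar : G.Valid sstar) :
    ∀ ordstar : ρ → τ → ℕ, InjOrd ordstar →
      G.ordWelfare sstar ordstar ≤ 2 * G.ordWelfare s ord := by
  intro ordstar hordstar
  classical
  have hOwn_s : ∀ i, ∀ t ∈ s i, G.owner t = i :=
    fun i t ht => G.strat_owned i (s i) (hNE.1 i) t ht
  have hOwn_star : ∀ i, ∀ t ∈ sstar i, G.owner t = i :=
    fun i t ht => G.strat_owned i (sstar i) (hstar i) t ht
  have hws : G.ordWelfare s ord = ∑ r, min (G.budget r) (G.totalDemand s r) :=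
    poa_welfare G s ord hOwn_s hNE.2.1
  have hwstar : G.ordWelfare sstar ordstar
      = ∑ r, min (G.budget r) (G.totalDemand sstar r) :=
    poa_welfare G sstar ordstar hOwn_star hordstar
  set b := G.budget with hb
  set D := G.totalDemand s with hD
  have hD0 : ∀ r, 0 ≤ D r := fun r =>
    Finset.sum_nonneg fun i _ => Finset.sum_nonneg fun t _ => G.demand_nonneg t r
  set A : ι → ρ → ℝ := fun i r => ∑ t ∈ sstar i, G.demand t r with hA
  have hA0 : ∀ i r, 0 ≤ A i r := fun i r =>
    Finset.sum_nonneg fun t _ => G.demand_nonneg t r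
  have hdev : ∀ i, ∑ r, (min (b r) (D r + A i r) - min (b r) (D r))
      ≤ G.ordUtil s ord i := by
    intro i
    set s1 := Function.update s i (sstar i) with hs1
    obtain ⟨ord', hre⟩ := poa_exists_reorder ord hNE.2.1 (sstar i \ s i)
    have hNEi := hNE.2.2 i (sstar i) (hstar i) ord' hre
    have hOwn1 : ∀ j, ∀ t ∈ s1 j, G.owner t = j := by
      intro j t ht
      rw [hs1, Function.update_apply] at ht
      split_ifs at ht with hj
      · subst hj; exact hOwn_star j t ht
      · exact hOwn_s j t ht
    set Dm : ρ → ℝ := fun r => ∑ j ∈ Finset.univ.erase i, ∑ t ∈ s j, G.demand t r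
      with hDmdef
    have hDm : ∀ r, G.totalDemand s1 r = Dm r + A i r := by
      intro r
      unfold BudgetGame.totalDemand
      rw [← Finset.add_sum_erase _ _ (Finset.mem_univ i)]
      have h1 : ∑ t ∈ s1 i, G.demand t r = A i r := by
        rw [hs1, Function.update_self]
      have h2 : ∀ j ∈ Finset.univ.erase i,
          (∑ t ∈ s1 j, G.demand t r) = ∑ t ∈ s j, G.demand t r := by
        intro j hj; rw [hs1, Function.update_of_ne (Finset.mem_erase.mp hj).1]
      rw [h1, Finset.sum_congr rfl h2, add_comm]
    have hDmD : ∀ r, Dm r ≤ D r := by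
      intro r
      have : D r = (∑ t ∈ s i, G.demand t r) + Dm r := by
        rw [hD]
        unfold BudgetGame.totalDemand
        rw [← Finset.add_sum_erase _ _ (Finset.mem_univ i)]
      have h0 : 0 ≤ ∑ t ∈ s i, G.demand t r :=
        Finset.sum_nonneg fun t _ => G.demand_nonneg t r
      linarith
    have hwelf1 : G.ordWelfare s1 ord' = ∑ r, min (b r) (Dm r + A i r) := by
      rw [poa_welfare G s1 ord' hOwn1 hre.1]
      exact Finset.sum_congr rfl fun r _ => by rw [hDm r]
    have hothers : ∑ j ∈ Finset.univ.erase i, G.ordUtil s1 ord' j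
        ≤ ∑ r, min (b r) (Dm r) := by
      have hswap : ∑ j ∈ Finset.univ.erase i, G.ordUtil s1 ord' j
          = ∑ r, ∑ j ∈ Finset.univ.erase i, ∑ t ∈ s1 j,
              G.ordTaskUtil s1 ord' t r := by
        unfold BudgetGame.ordUtil
        rw [Finset.sum_congr rfl (fun j _ => Finset.sum_comm), Finset.sum_comm]
      rw [hswap]
      apply Finset.sum_le_sum
      intro r _
      apply le_min
      · calc ∑ j ∈ Finset.univ.erase i, ∑ t ∈ s1 j, G.ordTaskUtil s1 ord' t r
            ≤ ∑ j, ∑ t ∈ s1 j, G.ordTaskUtil s1 ord' t r :=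
              Finset.sum_le_sum_of_subset_of_nonneg (Finset.subset_univ _)
                (fun j _ _ => Finset.sum_nonneg fun t _ =>
                  poa_util_nonneg G s1 ord' t r)
          _ = min (b r) (G.totalDemand s1 r) :=
              poa_resource_sum G s1 ord' hOwn1 hre.1 r
          _ ≤ b r := min_le_left _ _
      · apply Finset.sum_le_sum
        intro j hj
        have hsj : s1 j = s j := by
          rw [hs1, Function.update_of_ne (Finset.mem_erase.mp hj).1]
        rw [hsj]
        exact Finset.sum_le_sum fun t _ => min_le_left _ _
    have hiu : ∑ r, (min (b r) (Dm r + A i r) - min (b r) (Dm r))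
        ≤ G.ordUtil s1 ord' i := by
      have hsplit : G.ordWelfare s1 ord'
          = G.ordUtil s1 ord' i + ∑ j ∈ Finset.univ.erase i, G.ordUtil s1 ord' j :=
        (Finset.add_sum_erase _ _ (Finset.mem_univ i)).symm
      rw [hwelf1] at hsplit
      rw [Finset.sum_sub_distrib]
      linarith
    calc ∑ r, (min (b r) (D r + A i r) - min (b r) (D r))
        ≤ ∑ r, (min (b r) (Dm r + A i r) - min (b r) (Dm r)) :=
          Finset.sum_le_sum fun r _ =>
            poa_min_shift (b r) (Dm r) (D r) (A i r) (hDmD r) (hA0 i r)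
      _ ≤ G.ordUtil s1 ord' i := hiu
      _ ≤ G.ordUtil s ord i := hNEi
  have hAstar : ∀ r, G.totalDemand sstar r = ∑ i, A i r := fun r => rfl
  have hsum : ∑ r, (min (b r) (D r + G.totalDemand sstar r) - min (b r) (D r))
      ≤ G.ordWelfare s ord := by
    calc ∑ r, (min (b r) (D r + G.totalDemand sstar r) - min (b r) (D r))
        ≤ ∑ r, ∑ i, (min (b r) (D r + A i r) - min (b r) (D r)) := by
          apply Finset.sum_le_sum
          intro r _
          rw [hAstar r]
          exact poa_min_subadd (b r) (D r) (hD0 r) Finset.univ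
            (fun i => A i r) (fun i => hA0 i r)
      _ = ∑ i, ∑ r, (min (b r) (D r + A i r) - min (b r) (D r)) :=
          Finset.sum_comm
      _ ≤ ∑ i, G.ordUtil s ord i := Finset.sum_le_sum fun i _ => hdev i
      _ = G.ordWelfare s ord := rfl
  have hmono : ∑ r, min (b r) (G.totalDemand sstar r)
      ≤ ∑ r, min (b r) (D r + G.totalDemand sstar r) := by
    apply Finset.sum_le_sum
    intro r _
    exact min_le_min le_rfl (by linarith [hD0 r])
  rw [Finset.sum_sub_distrib] at hsum
  rw [hwstar]
  linarith [hws]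

end
end

section
/- For every ε with 0 < ε < 1 there exists an ordered budget game having a pure Nash equilibrium (s,≺) and a strategy profile s* with u(s*) = (2 − ε)·u(s,≺); i.e., the price of anarchy bound 2 for ordered budget games is asymptotically tight. -/
noncomputable section

open Finset

open BudgetGame in
private def egG (ε : ℝ) (h1 : ε < 1) : BudgetGame (Fin 2) (Fin 2) (Fin 3) where
  budget := ![1, 1 - ε]
  budget_pos := by intro r; fin_cases r <;> simp <;> linarith
  demand := ![![1, 0], ![1, 0], ![0, 1 - ε]]
  demand_nonneg := by intro t r; fin_cases t <;> fin_cases r <;> simp <;> linarith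
  owner := ![0, 1, 1]
  strat := ![{{0}}, {{1}, {2}}]
  strat_nonempty := by intro i; fin_cases i <;> simp
  strat_owned := by decide

open BudgetGame in
/-- for every `0 < ε < 1` there is an ordered budget game with a pure
Nash equilibrium `(s,≺)` and a strategy profile `s*` whose (order-independent) social
welfare equals `(2 − ε)` times that of `(s,≺)`. -/
theorem stmt_14 (ε : ℝ) (h0 : 0 < ε) (h1 : ε < 1) :
    ∃ (n m k : ℕ) (G : BudgetGame (Fin n) (Fin m) (Fin k))
      (s sstar : Fin n → Finset (Fin k)) (ord ordstar : Fin m → Fin k → ℕ),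
      G.ordNE s ord ∧ G.Valid sstar ∧ InjOrd ordstar ∧
      G.ordWelfare sstar ordstar = (2 - ε) * G.ordWelfare s ord := by
  have hb : (0:ℝ) < 1 - ε := by linarith
  refine ⟨2, 2, 3, egG ε h1, ![{0}, {1}], ![{0}, {2}],
    (fun _ => ![1, 0, 2]), (fun _ => ![1, 0, 2]), ?_, ?_, ?_, ?_⟩
  · refine ⟨by intro i; fin_cases i <;> simp [egG], by intro r; exact (by decide : Function.Injective ![1, 0, 2]), ?_⟩
    intro i a ha ord' hre
    obtain ⟨hinj, hiso, hafter⟩ := hre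
    fin_cases i
    · -- player 0, only strategy {0}
      simp only [Fin.zero_eta, Fin.mk_one, id_eq] at ha hiso hafter ⊢
      have ha' : a = {0} := by simpa [egG] using ha
      subst ha'
      have hupd : Function.update ![({0} : Finset (Fin 3)), {1}] (0 : Fin 2) {0}
          = ![({0} : Finset (Fin 3)), {1}] := by
        funext j; fin_cases j <;> simp
      rw [hupd]
      have hnew : ({0} : Finset (Fin 3)) \ ![({0} : Finset (Fin 3)), {1}] 0 = ∅ := by decide
      rw [hnew] at hiso
      have h10 : ∀ r, ord' r 1 < ord' r 0 := by
        intro r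
        have := hiso r 1 (Finset.notMem_empty _) 0 (Finset.notMem_empty _)
        simp at this; omega
      simp only [ordUtil, ordTaskUtil, prefixDemand, egG, Fin.sum_univ_two,
        Finset.sum_singleton, Finset.filter_singleton, Matrix.cons_val_zero,
        Matrix.cons_val_one, Matrix.head_cons, h10, if_pos, lt_self_iff_false, if_neg,
        not_false_iff]
      norm_num
    · -- player 1, strategies {1} and {2}
      simp only [Fin.zero_eta, Fin.mk_one, id_eq] at ha hiso hafter ⊢
      have ha' : a = {1} ∨ a = {2} := by simpa [egG] using ha
      rcases ha' with ha | ha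
      · subst ha
        have hupd : Function.update ![({0} : Finset (Fin 3)), {1}] (1 : Fin 2) {1}
            = ![({0} : Finset (Fin 3)), {1}] := by
          funext j; fin_cases j <;> simp
        rw [hupd]
        have hnew : ({1} : Finset (Fin 3)) \ ![({0} : Finset (Fin 3)), {1}] 1 = ∅ := by decide
        rw [hnew] at hiso
        have h01 : ∀ r, ¬ ord' r 0 < ord' r 1 := by
          intro r
          have := hiso r 0 (Finset.notMem_empty _) 1 (Finset.notMem_empty _)
          simp at this; omega
        simp only [ordUtil, ordTaskUtil, prefixDemand, egG, Fin.sum_univ_two,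
          Finset.sum_singleton, Finset.filter_singleton, Matrix.cons_val_zero,
          Matrix.cons_val_one, Matrix.head_cons, h01, if_neg, lt_self_iff_false,
          not_false_iff]
        norm_num
      · subst ha
        have hupd : Function.update ![({0} : Finset (Fin 3)), {1}] (1 : Fin 2) {2}
            = ![({0} : Finset (Fin 3)), {2}] := by
          funext j; fin_cases j <;> simp
        rw [hupd]
        simp only [ordUtil, ordTaskUtil, prefixDemand, egG, Fin.sum_univ_two,
          Finset.sum_singleton, Finset.filter_singleton, Matrix.cons_val_zero,
          Matrix.cons_val_one, Matrix.head_cons, lt_self_iff_false, if_neg,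
          not_false_iff, Matrix.cons_val_two, Matrix.tail_cons]
        norm_num
        exact Or.inl h0.le
  · intro i; fin_cases i <;> simp [egG]
  · intro r; exact (by decide : Function.Injective ![1, 0, 2])
  · simp only [ordWelfare, ordUtil, ordTaskUtil, prefixDemand, egG, Fin.sum_univ_two,
      Finset.sum_singleton, Finset.filter_singleton, Matrix.cons_val_zero,
      Matrix.cons_val_one, Matrix.head_cons, Matrix.cons_val_two, Matrix.tail_cons]
    norm_num
    ring

end
end

section
/- Consider an ordered budget game with the tie-breaking rule p_max: before each simultaneous strategy change, players are assigned distinct priorities so that a player with strictly larger current utility receives a strictly higher priority (ties broken arbitrarily), and the newly chosen tasks of the deviating players are appended at the end of every resource's order, ordered among themselves in decreasing order of their owners' priorities. If in each step every deviating player would strictly increase her utility as a sole deviator from the current state, then every sequence of such simultaneous improvement steps is finite and terminates in a pure Nash equilibrium. -/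
set_option maxHeartbeats 800000
set_option linter.unusedSectionVars false


noncomputable section

open Finset

open BudgetGame in
/-- A simultaneous improvement step with priorities `p`: a nonempty set `N'` of
players changes strategies, each of whom would strictly increase her utility as a
sole deviator from the current state; the newly chosen tasks are appended at the end
of every resource's order, ordered among themselves in decreasing order of their
owners' priorities. -/
def SimImprove {ι ρ τ : Type*} [Fintype ι] [Fintype ρ] [Fintype τ]
    [DecidableEq ι] [DecidableEq τ]
    (G : BudgetGame ι ρ τ) (p : ι → ℕ)
    (s : ι → Finset τ) (ord : ρ → τ → ℕ)
    (s' : ι → Finset τ) (ord' : ρ → τ → ℕ) : Prop :=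
  ∃ N' : Finset ι, N'.Nonempty ∧
    (∀ j ∉ N', s' j = s j) ∧
    (∀ i ∈ N', s' i ∈ G.strat i) ∧
    (∀ i ∈ N', ∃ ord'' : ρ → τ → ℕ, IsReorder ord ord'' (s' i \ s i) ∧
      G.ordUtil s ord i < G.ordUtil (Function.update s i (s' i)) ord'' i) ∧
    IsReorder ord ord' (newTasks N' s s') ∧
    (∀ r : ρ, ∀ t ∈ newTasks N' s s', ∀ t' ∈ newTasks N' s s',
      p (G.owner t') < p (G.owner t) → ord' r t < ord' r t')

open BudgetGame in
/-- A simultaneous improvement step under the tie-breaking rule `p_max`: priorities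
are (re)assigned injectively so that a player with strictly larger current utility
gets a strictly higher priority, and the step is a simultaneous improvement step for
these priorities. -/
def SimImproveMax {ι ρ τ : Type*} [Fintype ι] [Fintype ρ] [Fintype τ]
    [DecidableEq ι] [DecidableEq τ]
    (G : BudgetGame ι ρ τ)
    (s : ι → Finset τ) (ord : ρ → τ → ℕ)
    (s' : ι → Finset τ) (ord' : ρ → τ → ℕ) : Prop :=
  ∃ p : ι → ℕ, Function.Injective p ∧
    (∀ i j : ι, G.ordUtil s ord j < G.ordUtil s ord i → p j < p i) ∧
    SimImprove G p s ord s' ord'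

section Aux

open Finset BudgetGame

variable {ι ρ τ : Type*} [Fintype ι] [Fintype ρ] [Fintype τ]
  [DecidableEq ι] [DecidableEq τ]

lemma two_step (a S R : ℝ) (ha : 0 ≤ a) (hS : 0 ≤ S) :
    min a (max 0 R) + min S (max 0 (R - a)) = min (a + S) (max 0 R) := by
  simp only [min_def, max_def]
  split_ifs <;> linarith

lemma blockSum (d : τ → ℝ) (g : τ → ℕ) (hg : Function.Injective g) :
    ∀ (Nw : Finset τ), (∀ t ∈ Nw, 0 ≤ d t) → ∀ R : ℝ,
      ∑ t ∈ Nw, min (d t) (max 0 (R - ∑ t' ∈ Nw.filter (fun t' => g t' < g t), d t'))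
        = min (∑ t ∈ Nw, d t) (max 0 R) := by
  intro Nw
  induction Nw using Finset.strongInduction with
  | _ Nw ih =>
    intro hd R
    rcases Nw.eq_empty_or_nonempty with rfl | hne
    · simp [min_eq_left (le_max_left 0 R)]
    obtain ⟨t0, ht0, hmin⟩ := Nw.exists_min_image g hne
    have hfilt0 : Nw.filter (fun t' => g t' < g t0) = ∅ := by
      refine Finset.filter_eq_empty_iff.mpr ?_
      intro t' ht'
      exact not_lt.mpr (hmin t' ht')
    have herase : ∀ t ∈ Nw.erase t0,
        Nw.filter (fun t' => g t' < g t)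
          = insert t0 ((Nw.erase t0).filter (fun t' => g t' < g t)) := by
      intro t ht
      obtain ⟨htne, htNw⟩ := Finset.mem_erase.mp ht
      ext x
      simp only [Finset.mem_filter, Finset.mem_insert, Finset.mem_erase]
      constructor
      · rintro ⟨hx, hlt⟩
        by_cases hx0 : x = t0
        · exact Or.inl hx0
        · exact Or.inr ⟨⟨hx0, hx⟩, hlt⟩
      · rintro (rfl | ⟨⟨_, hx⟩, hlt⟩)
        · refine ⟨ht0, lt_of_le_of_ne (hmin t htNw) ?_⟩
          intro h; exact htne (hg h).symm
        · exact ⟨hx, hlt⟩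
    have hsum : ∀ t ∈ Nw.erase t0,
        ∑ t' ∈ Nw.filter (fun t' => g t' < g t), d t'
          = d t0 + ∑ t' ∈ (Nw.erase t0).filter (fun t' => g t' < g t), d t' := by
      intro t ht
      rw [herase t ht, Finset.sum_insert]
      simp only [Finset.mem_filter, Finset.mem_erase]
      rintro ⟨⟨h, _⟩, _⟩; exact h rfl
    have hd' : ∀ t ∈ Nw.erase t0, 0 ≤ d t := fun t ht => hd t (Finset.mem_of_mem_erase ht)
    calc ∑ t ∈ Nw, min (d t) (max 0 (R - ∑ t' ∈ Nw.filter (fun t' => g t' < g t), d t'))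
        = min (d t0) (max 0 (R - ∑ t' ∈ Nw.filter (fun t' => g t' < g t0), d t'))
          + ∑ t ∈ Nw.erase t0,
              min (d t) (max 0 (R - ∑ t' ∈ Nw.filter (fun t' => g t' < g t), d t')) :=
          (Finset.add_sum_erase _ _ ht0).symm
      _ = min (d t0) (max 0 R)
          + ∑ t ∈ Nw.erase t0,
              min (d t) (max 0 ((R - d t0) - ∑ t' ∈ (Nw.erase t0).filter (fun t' => g t' < g t), d t')) := by
          rw [hfilt0]
          simp only [Finset.sum_empty, sub_zero]
          congr 1
          refine Finset.sum_congr rfl fun t ht => ?_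
          rw [hsum t ht]; ring_nf
      _ = min (d t0) (max 0 R) + min (∑ t ∈ Nw.erase t0, d t) (max 0 (R - d t0)) := by
          rw [ih (Nw.erase t0) (Finset.erase_ssubset ht0) hd' (R - d t0)]
      _ = min (d t0 + ∑ t ∈ Nw.erase t0, d t) (max 0 R) :=
          two_step _ _ _ (hd t0 ht0) (Finset.sum_nonneg hd')
      _ = min (∑ t ∈ Nw, d t) (max 0 R) := by rw [Finset.add_sum_erase _ _ ht0]

lemma exists_priority {ι : Type*} [Fintype ι] (u : ι → ℝ) :
    ∃ p : ι → ℕ, Function.Injective p ∧ ∀ i j, u j < u i → p j < p i := by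
  classical
  set e : ι → ℕ := fun i => (Fintype.equivFin ι i : ℕ) with he
  have heinj : Function.Injective e := fun a b h =>
    (Fintype.equivFin ι).injective (Fin.val_injective h)
  set L : ι → ι → Prop := fun i j => u i < u j ∨ (u i = u j ∧ e i < e j) with hL
  set p : ι → ℕ := fun i => (Finset.univ.filter (fun k => L k i)).card with hp
  have hLtrans : ∀ {a b c}, L a b → L b c → L a c := by
    rintro a b c (h1 | ⟨h1, h1'⟩) (h2 | ⟨h2, h2'⟩)
    · exact Or.inl (h1.trans h2)
    · exact Or.inl (h2 ▸ h1)
    · exact Or.inl (h1 ▸ h2)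
    · exact Or.inr ⟨h1.trans h2, h1'.trans h2'⟩
  have hmono : ∀ {i j}, L i j → p i < p j := by
    intro i j hij
    apply Finset.card_lt_card
    constructor
    · intro k hk
      simp only [Finset.mem_filter, Finset.mem_univ, true_and] at *
      exact hLtrans hk hij
    · intro hsub
      have : i ∈ Finset.univ.filter (fun k => L k j) := by
        simp only [Finset.mem_filter, Finset.mem_univ, true_and]; exact hij
      have := hsub this
      simp only [Finset.mem_filter, Finset.mem_univ, true_and, hL] at this
      rcases this with h | h <;> exact absurd h (lt_irrefl _)
  refine ⟨p, ?_, fun i j h => hmono (Or.inl h)⟩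
  intro i j hpij
  by_contra hne
  rcases lt_trichotomy (u i) (u j) with h | h | h
  · exact absurd hpij (ne_of_lt (hmono (Or.inl h)))
  · rcases lt_or_gt_of_ne (heinj.ne hne) with h' | h'
    · exact absurd hpij (ne_of_lt (hmono (Or.inr ⟨h, h'⟩)))
    · exact absurd hpij.symm (ne_of_lt (hmono (Or.inr ⟨h.symm, h'⟩)))
  · exact absurd hpij.symm (ne_of_lt (hmono (Or.inl h)))

variable (G : BudgetGame ι ρ τ)

lemma aux_prefix_le {s₁ s₂ : ι → Finset τ} {ord₁ ord₂ : ρ → τ → ℕ} {t : τ} {r : ρ}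
    (h : ∀ i, (s₂ i).filter (fun t' => ord₂ r t' < ord₂ r t)
        ⊆ (s₁ i).filter (fun t' => ord₁ r t' < ord₁ r t)) :
    G.prefixDemand s₂ ord₂ t r ≤ G.prefixDemand s₁ ord₁ t r := by
  unfold BudgetGame.prefixDemand
  exact Finset.sum_le_sum fun i _ =>
    Finset.sum_le_sum_of_subset_of_nonneg (h i) (fun t' _ _ => G.demand_nonneg t' r)

lemma aux_taskUtil_mono {s₁ s₂ : ι → Finset τ} {ord₁ ord₂ : ρ → τ → ℕ} {t : τ} {r : ρ}
    (h : G.prefixDemand s₂ ord₂ t r ≤ G.prefixDemand s₁ ord₁ t r) :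
    G.ordTaskUtil s₁ ord₁ t r ≤ G.ordTaskUtil s₂ ord₂ t r := by
  unfold BudgetGame.ordTaskUtil
  gcongr

lemma aux_filter_split (A B : Finset τ) (P : τ → Prop) [DecidablePred P]
    (h1 : ∀ x ∈ A, x ∉ B → P x) (d : τ → ℝ) :
    ∑ t ∈ A.filter P, d t = ∑ t ∈ A \ B, d t + ∑ t ∈ (A ∩ B).filter P, d t := by
  have heq : A.filter P = (A \ B) ∪ (A ∩ B).filter P := by
    ext x
    simp only [Finset.mem_filter, Finset.mem_sdiff, Finset.mem_union, Finset.mem_inter]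
    constructor
    · rintro ⟨hx, hP⟩
      by_cases hB : x ∈ B
      · exact Or.inr ⟨⟨hx, hB⟩, hP⟩
      · exact Or.inl ⟨hx, hB⟩
    · rintro (⟨hx, hB⟩ | ⟨⟨hx, _⟩, hP⟩)
      · exact ⟨hx, h1 x hx hB⟩
      · exact ⟨hx, hP⟩
  rw [heq, Finset.sum_union]
  rw [Finset.disjoint_left]
  intro x hx hx'
  simp only [Finset.mem_sdiff] at hx
  simp only [Finset.mem_filter, Finset.mem_inter] at hx'
  exact hx.2 hx'.1.2

end Aux


section Aux2

open Finset BudgetGame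

variable {ι ρ τ : Type*} [Fintype ι] [Fintype ρ] [Fintype τ]
  [DecidableEq ι] [DecidableEq τ]
variable (G : BudgetGame ι ρ τ)

lemma aux_hsub {s s' : ι → Finset τ} {N' : Finset ι}
    (hfix : ∀ j ∉ N', s' j = s j) :
    ∀ i, ∀ t' ∈ s' i, t' ∉ newTasks N' s s' → t' ∈ s i := by
  intro i t' ht' hnew
  by_cases hi : i ∈ N'
  · by_contra hs
    exact hnew (Finset.mem_biUnion.mpr ⟨i, hi, Finset.mem_sdiff.mpr ⟨ht', hs⟩⟩)
  · rw [← hfix i hi]; exact ht'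

lemma aux_new_owner {s s' : ι → Finset τ} {N' : Finset ι}
    (hVs' : G.Valid s') :
    ∀ t ∈ newTasks N' s s', G.owner t ∈ N' ∧ t ∈ s' (G.owner t) \ s (G.owner t) := by
  intro t ht
  obtain ⟨j, hj, htj⟩ := Finset.mem_biUnion.mp ht
  have : G.owner t = j :=
    G.strat_owned j (s' j) (hVs' j) t (Finset.mem_sdiff.mp htj).1
  rw [this]; exact ⟨hj, htj⟩

/-- Lemma A: a non-deviating player weakly improves. -/
lemma aux_nondev {s s' : ι → Finset τ} {ord ord' : ρ → τ → ℕ} {N' : Finset ι}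
    (hVs : G.Valid s) (hVs' : G.Valid s')
    (hfix : ∀ j ∉ N', s' j = s j)
    (hre : IsReorder ord ord' (newTasks N' s s'))
    {j : ι} (hj : j ∉ N') :
    G.ordUtil s ord j ≤ G.ordUtil s' ord' j := by
  unfold BudgetGame.ordUtil
  rw [hfix j hj]
  refine Finset.sum_le_sum fun t ht => Finset.sum_le_sum fun r _ => ?_
  have htnew : t ∉ newTasks N' s s' := by
    intro h
    have h1 := (aux_new_owner G hVs' t h).1
    have h2 : G.owner t = j := G.strat_owned j (s j) (hVs j) t ht
    rw [h2] at h1; exact hj h1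
  refine aux_taskUtil_mono G (aux_prefix_le G fun i => ?_)
  intro t' ht'
  simp only [Finset.mem_filter] at ht' ⊢
  have ht'new : t' ∉ newTasks N' s s' := by
    intro h
    exact absurd ht'.2 (asymm (hre.2.2 r t htnew t' h))
  refine ⟨aux_hsub hfix i t' ht'.1 ht'new, ?_⟩
  exact (hre.2.1 r t' ht'new t htnew).mp ht'.2

/-- Lemma B: the top-priority deviator gets at least her sole-deviation utility. -/
lemma aux_dev {s s' : ι → Finset τ} {ord ord' : ρ → τ → ℕ} {N' : Finset ι}
    (hVs : G.Valid s) (hVs' : G.Valid s')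
    (hfix : ∀ j ∉ N', s' j = s j)
    (hre : IsReorder ord ord' (newTasks N' s s'))
    (p : ι → ℕ) (hpinj : Function.Injective p)
    (hprio : ∀ r : ρ, ∀ t ∈ newTasks N' s s', ∀ t' ∈ newTasks N' s s',
      p (G.owner t') < p (G.owner t) → ord' r t < ord' r t')
    {i₀ : ι} (hi₀ : i₀ ∈ N') (hmaxp : ∀ j ∈ N', p j ≤ p i₀)
    (ord'' : ρ → τ → ℕ) (hre'' : IsReorder ord ord'' (s' i₀ \ s i₀)) :
    G.ordUtil (Function.update s i₀ (s' i₀)) ord'' i₀ ≤ G.ordUtil s' ord' i₀ := by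
  set newT := newTasks N' s s' with hnewT
  set Nw := s' i₀ \ s i₀ with hNw
  set sh := Function.update s i₀ (s' i₀) with hsh
  have hshi₀ : sh i₀ = s' i₀ := Function.update_self _ _ _
  have hshne : ∀ i, i ≠ i₀ → sh i = s i := fun i hi => Function.update_of_ne hi _ _
  have hNwsub : Nw ⊆ newT := fun t ht => Finset.mem_biUnion.mpr ⟨i₀, hi₀, ht⟩
  have hK : ∀ t, t ∈ s' i₀ → t ∉ Nw → t ∈ s i₀ ∧ t ∉ newT := by
    intro t ht hNwt
    have hts : t ∈ s i₀ := by
      by_contra hs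
      exact hNwt (Finset.mem_sdiff.mpr ⟨ht, hs⟩)
    refine ⟨hts, fun hnew => ?_⟩
    have h1 := (aux_new_owner G hVs' t hnew).2
    have h2 : G.owner t = i₀ := G.strat_owned i₀ (s' i₀) (hVs' i₀) t ht
    rw [h2] at h1
    exact (Finset.mem_sdiff.mp h1).2 hts
  have hs'new : s' i₀ ∩ newT = Nw := by
    ext t
    simp only [Finset.mem_inter]
    constructor
    · rintro ⟨ht, hnew⟩
      have h1 := (aux_new_owner G hVs' t hnew).2
      have h2 : G.owner t = i₀ := G.strat_owned i₀ (s' i₀) (hVs' i₀) t ht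
      rwa [h2] at h1
    · intro ht
      exact ⟨(Finset.mem_sdiff.mp ht).1, hNwsub ht⟩
  have hshNw : ∀ i, i ≠ i₀ → sh i ∩ Nw = ∅ := by
    intro i hi
    rw [hshne i hi]
    refine Finset.eq_empty_of_forall_notMem fun t ht => ?_
    obtain ⟨ht1, ht2⟩ := Finset.mem_inter.mp ht
    have h1 : G.owner t = i := G.strat_owned i (s i) (hVs i) t ht1
    have h2 : G.owner t = i₀ :=
      G.strat_owned i₀ (s' i₀) (hVs' i₀) t (Finset.mem_sdiff.mp ht2).1
    exact hi (h1 ▸ h2 ▸ rfl)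
  -- split the utility sums over K = s' i₀ \ Nw and Nw
  have hsplit : ∀ (st : ι → Finset τ) (o : ρ → τ → ℕ), st i₀ = s' i₀ →
      G.ordUtil st o i₀
        = ∑ t ∈ s' i₀ \ Nw, ∑ r, G.ordTaskUtil st o t r
          + ∑ r, ∑ t ∈ Nw, G.ordTaskUtil st o t r := by
    intro st o h
    unfold BudgetGame.ordUtil
    rw [h, ← Finset.sum_sdiff (Finset.sdiff_subset : Nw ⊆ s' i₀), Finset.sum_comm (s := Nw)]
  rw [hsplit sh ord'' hshi₀, hsplit s' ord' rfl]
  have hKpart : ∀ t ∈ s' i₀ \ Nw, ∀ r : ρ,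
      G.ordTaskUtil sh ord'' t r ≤ G.ordTaskUtil s' ord' t r := by
    intro t ht r
    obtain ⟨ht1, ht2⟩ := Finset.mem_sdiff.mp ht
    obtain ⟨hts, htnew⟩ := hK t ht1 ht2
    refine aux_taskUtil_mono G (aux_prefix_le G fun i => ?_)
    intro t' ht'
    simp only [Finset.mem_filter] at ht' ⊢
    have ht'new : t' ∉ newT := by
      intro h
      exact absurd ht'.2 (asymm (hre.2.2 r t htnew t' h))
    have ht'Nw : t' ∉ Nw := fun h => ht'new (hNwsub h)
    have hord : ord r t' < ord r t := (hre.2.1 r t' ht'new t htnew).mp ht'.2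
    refine ⟨?_, (hre''.2.1 r t' ht'Nw t ht2).mpr hord⟩
    by_cases hi : i = i₀
    · rw [hi, hshi₀]; rw [hi] at ht'; exact ht'.1
    · rw [hshne i hi]; exact aux_hsub hfix i t' ht'.1 ht'new
  refine add_le_add (Finset.sum_le_sum fun t ht =>
    Finset.sum_le_sum fun r _ => hKpart t ht r) (Finset.sum_le_sum fun r _ => ?_)
  -- the new-tasks part, per resource r
  set db : τ → ℝ := fun t' => G.demand t' r with hdb
  have hdbnn : ∀ t ∈ Nw, 0 ≤ db t := fun t _ => G.demand_nonneg t r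
  set Cs : ℝ := ∑ i, ∑ t' ∈ sh i \ Nw, db t' with hCs
  set Cb : ℝ := ∑ i, ∑ t' ∈ s' i \ newT, db t' with hCb
  have hP1 : ∀ t ∈ Nw, G.prefixDemand sh ord'' t r
      = Cs + ∑ t' ∈ Nw.filter (fun t' => ord'' r t' < ord'' r t), db t' := by
    intro t ht
    unfold BudgetGame.prefixDemand
    have := fun i => aux_filter_split (sh i) Nw (fun t' => ord'' r t' < ord'' r t)
      (fun x _ hx => hre''.2.2 r x hx t ht) db
    rw [Finset.sum_congr rfl fun i _ => this i, Finset.sum_add_distrib]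
    congr 1
    rw [Finset.sum_eq_single i₀]
    · rw [hshi₀, Finset.inter_eq_right.mpr (Finset.sdiff_subset : s' i₀ \ s i₀ ⊆ s' i₀)]
    · intro i _ hi
      rw [hshNw i hi]
      simp
    · intro h; exact absurd (Finset.mem_univ i₀) h
  have hP2 : ∀ t ∈ Nw, G.prefixDemand s' ord' t r
      = Cb + ∑ t' ∈ Nw.filter (fun t' => ord' r t' < ord' r t), db t' := by
    intro t ht
    unfold BudgetGame.prefixDemand
    have := fun i => aux_filter_split (s' i) newT (fun t' => ord' r t' < ord' r t)
      (fun x _ hx => hre.2.2 r x hx t (hNwsub ht)) db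
    rw [Finset.sum_congr rfl fun i _ => this i, Finset.sum_add_distrib]
    congr 1
    rw [Finset.sum_eq_single i₀]
    · rw [hs'new]
    · intro i _ hi
      have : (s' i ∩ newT).filter (fun t' => ord' r t' < ord' r t) = ∅ := by
        refine Finset.filter_eq_empty_iff.mpr fun x hx => ?_
        obtain ⟨hx1, hx2⟩ := Finset.mem_inter.mp hx
        have hox : G.owner x = i := G.strat_owned i (s' i) (hVs' i) x hx1
        have hoxN : G.owner x ∈ N' := (aux_new_owner G hVs' x hx2).1
        have hot : G.owner t = i₀ :=
          G.strat_owned i₀ (s' i₀) (hVs' i₀) t (Finset.mem_sdiff.mp ht).1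
        have hplt : p (G.owner x) < p (G.owner t) := by
          rw [hox, hot]
          refine lt_of_le_of_ne (hmaxp i (hox ▸ hoxN)) fun h => hi (hpinj h)
        exact not_lt.mpr (le_of_lt (hprio r t (hNwsub ht) x hx2 hplt))
      rw [this]
      simp
    · intro h; exact absurd (Finset.mem_univ i₀) h
  have hCble : Cb ≤ Cs := by
    refine Finset.sum_le_sum fun i _ => Finset.sum_le_sum_of_subset_of_nonneg ?_
      (fun t' _ _ => G.demand_nonneg t' r)
    intro x hx
    obtain ⟨hx1, hx2⟩ := Finset.mem_sdiff.mp hx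
    have hxNw : x ∉ Nw := fun h => hx2 (hNwsub h)
    refine Finset.mem_sdiff.mpr ⟨?_, hxNw⟩
    by_cases hi : i = i₀
    · rw [hi, hshi₀]; rw [hi] at hx1; exact hx1
    · rw [hshne i hi]; exact aux_hsub hfix i x hx1 hx2
  have h1 : ∑ t ∈ Nw, G.ordTaskUtil sh ord'' t r
      = min (∑ t ∈ Nw, db t) (max 0 (G.budget r - Cs)) := by
    rw [show ∑ t ∈ Nw, G.ordTaskUtil sh ord'' t r
        = ∑ t ∈ Nw, min (db t) (max 0 ((G.budget r - Cs)
            - ∑ t' ∈ Nw.filter (fun t' => ord'' r t' < ord'' r t), db t')) from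
      Finset.sum_congr rfl fun t ht => by
        unfold BudgetGame.ordTaskUtil
        rw [hP1 t ht]; ring_nf; rfl]
    exact blockSum db (ord'' r) (hre''.1 r) Nw hdbnn _
  have h2 : ∑ t ∈ Nw, G.ordTaskUtil s' ord' t r
      = min (∑ t ∈ Nw, db t) (max 0 (G.budget r - Cb)) := by
    rw [show ∑ t ∈ Nw, G.ordTaskUtil s' ord' t r
        = ∑ t ∈ Nw, min (db t) (max 0 ((G.budget r - Cb)
            - ∑ t' ∈ Nw.filter (fun t' => ord' r t' < ord' r t), db t')) from
      Finset.sum_congr rfl fun t ht => by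
        unfold BudgetGame.ordTaskUtil
        rw [hP2 t ht]; ring_nf; rfl]
    exact blockSum db (ord' r) (hre.1 r) Nw hdbnn _
  rw [h1, h2]
  have : max 0 (G.budget r - Cs) ≤ max 0 (G.budget r - Cb) := by gcongr
  exact min_le_min le_rfl this

end Aux2


section Aux3

open Finset BudgetGame

variable {ι ρ τ : Type*} [Fintype ι] [Fintype ρ] [Fintype τ]
  [DecidableEq ι] [DecidableEq τ]

/-- Utility computed from a boolean "comes before" relation; used to show that only
finitely many utility values can ever occur. -/
noncomputable def boolUtil (G : BudgetGame ι ρ τ) (s : ι → Finset τ)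
    (b : ρ → τ → τ → Bool) (i : ι) : ℝ :=
  ∑ t ∈ s i, ∑ r, min (G.demand t r)
    (max 0 (G.budget r - ∑ j, ∑ t' ∈ (s j).filter (fun t' => b r t' t), G.demand t' r))

lemma ordUtil_eq_boolUtil (G : BudgetGame ι ρ τ) (s : ι → Finset τ)
    (ord : ρ → τ → ℕ) (i : ι) :
    G.ordUtil s ord i = boolUtil G s (fun r t' t => decide (ord r t' < ord r t)) i := by
  unfold BudgetGame.ordUtil BudgetGame.ordTaskUtil BudgetGame.prefixDemand boolUtil
  simp

lemma util_finite (G : BudgetGame ι ρ τ) :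
    ∃ V : Finset ℝ, ∀ (s : ι → Finset τ) (ord : ρ → τ → ℕ) (i : ι),
      G.ordUtil s ord i ∈ V := by
  classical
  have hfin : (Set.range (fun x : ((ι → Finset τ) × (ρ → τ → τ → Bool)) × ι =>
      boolUtil G x.1.1 x.1.2 x.2)).Finite := Set.finite_range _
  refine ⟨hfin.toFinset, fun s ord i => ?_⟩
  rw [ordUtil_eq_boolUtil]
  exact hfin.mem_toFinset.mpr ⟨((s, fun r t' t => decide (ord r t' < ord r t)), i), rfl⟩

end Aux3


open BudgetGame in
theorem stmt_16' {ι ρ τ : Type*} [Fintype ι] [Fintype ρ] [Fintype τ]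
    [DecidableEq ι] [DecidableEq τ]
    (G : BudgetGame ι ρ τ) :
    (¬ ∃ f : ℕ → (ι → Finset τ) × (ρ → τ → ℕ),
      G.Valid (f 0).1 ∧ InjOrd (f 0).2 ∧
      ∀ k : ℕ, SimImproveMax G (f k).1 (f k).2 (f (k + 1)).1 (f (k + 1)).2) ∧
    (∀ (s : ι → Finset τ) (ord : ρ → τ → ℕ), G.Valid s → InjOrd ord →
      (¬ ∃ (s' : ι → Finset τ) (ord' : ρ → τ → ℕ), SimImproveMax G s ord s' ord') →
      G.ordNE s ord) := by
  classical
  constructor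
  · -- Part 1: no infinite sequence of simultaneous improvement steps
    rintro ⟨f, h0v, h0i, hstep⟩
    have hstate : ∀ k, G.Valid (f k).1 ∧ InjOrd (f k).2 := by
      intro k
      induction k with
      | zero => exact ⟨h0v, h0i⟩
      | succ k ih =>
        obtain ⟨p, hpinj, hpm, N', hne, hfix, hstrat, himp, hre, hprio⟩ := hstep k
        refine ⟨fun i => ?_, hre.1⟩
        by_cases hi : i ∈ N'
        · exact hstrat i hi
        · rw [hfix i hi]; exact ih.1 i
    set u : ℕ → ι → ℝ := fun k i => G.ordUtil (f k).1 (f k).2 i with hu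
    obtain ⟨V, hmemV⟩ := util_finite G
    set rank : ℝ → ℕ := fun x => (V.filter (fun v => v ≤ x)).card with hrank
    have hrank_mono : ∀ {x y : ℝ}, x ≤ y → rank x ≤ rank y := by
      intro x y h
      refine Finset.card_le_card fun v hv => ?_
      simp only [Finset.mem_filter] at *
      exact ⟨hv.1, hv.2.trans h⟩
    have hrank_strict : ∀ {x y : ℝ}, y ∈ V → x < y → rank x < rank y := by
      intro x y hy h
      refine Finset.card_lt_card ⟨fun v hv => ?_, fun hsub => ?_⟩
      · simp only [Finset.mem_filter] at *
        exact ⟨hv.1, hv.2.trans h.le⟩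
      · have h1 : y ∈ V.filter (fun v => v ≤ y) := Finset.mem_filter.mpr ⟨hy, le_rfl⟩
        have h2 := hsub h1
        simp only [Finset.mem_filter] at h2
        exact absurd h2.2 (not_le.mpr h)
    have hrank_le : ∀ x : ℝ, rank x ≤ V.card := fun x => Finset.card_filter_le _ _
    set M := Fintype.card ι + 1 with hM
    have hM1 : 1 ≤ M := by omega
    set Φ : ℕ → ℕ := fun k => ∑ i, M ^ rank (u k i) with hΦ
    have hkey : ∀ k, Φ k < Φ (k + 1) := by
      intro k
      obtain ⟨p, hpinj, hpm, N', hne, hfix, hstrat, himp, hre, hprio⟩ := hstep k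
      have hVs := (hstate k).1
      have hVs' := (hstate (k + 1)).1
      obtain ⟨i₀, hi₀, hmaxp⟩ := N'.exists_max_image p hne
      have hA : ∀ j ∉ N', u k j ≤ u (k + 1) j := fun j hj =>
        aux_nondev G hVs hVs' hfix hre hj
      have hB : u k i₀ < u (k + 1) i₀ := by
        obtain ⟨ord'', hre'', hlt⟩ := himp i₀ hi₀
        exact hlt.trans_le
          (aux_dev G hVs hVs' hfix hre p hpinj hprio hi₀ hmaxp ord'' hre'')
      have hC : ∀ j ∈ N', u k j ≤ u k i₀ := by
        intro j hj
        by_contra h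
        exact absurd (hpm j i₀ (not_le.mp h)) (not_lt.mpr (hmaxp j hj))
      have hrB : rank (u k i₀) + 1 ≤ rank (u (k + 1) i₀) :=
        hrank_strict (hmemV _ _ _) hB
      have hsplitk : ∀ m, Φ m =
          ∑ j ∈ Finset.univ \ N', M ^ rank (u m j) + ∑ j ∈ N', M ^ rank (u m j) :=
        fun m => (Finset.sum_sdiff (Finset.subset_univ N')).symm
      have h1 : ∑ j ∈ Finset.univ \ N', M ^ rank (u k j)
          ≤ ∑ j ∈ Finset.univ \ N', M ^ rank (u (k + 1) j) :=
        Finset.sum_le_sum fun j hj =>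
          Nat.pow_le_pow_right hM1 (hrank_mono (hA j (Finset.mem_sdiff.mp hj).2))
      have hXpos : 0 < M ^ rank (u k i₀) := Nat.pow_pos (by omega)
      have h2 : ∑ j ∈ N', M ^ rank (u k j) < ∑ j ∈ N', M ^ rank (u (k + 1) j) := by
        calc ∑ j ∈ N', M ^ rank (u k j)
            ≤ ∑ _j ∈ N', M ^ rank (u k i₀) :=
              Finset.sum_le_sum fun j hj => Nat.pow_le_pow_right hM1 (hrank_mono (hC j hj))
          _ = N'.card * M ^ rank (u k i₀) := by rw [Finset.sum_const, smul_eq_mul]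
          _ < M * M ^ rank (u k i₀) := by
              refine mul_lt_mul_of_pos_right ?_ hXpos
              have := Finset.card_le_univ N'
              omega
          _ = M ^ (rank (u k i₀) + 1) := by rw [pow_succ, Nat.mul_comm]
          _ ≤ M ^ rank (u (k + 1) i₀) := Nat.pow_le_pow_right hM1 hrB
          _ ≤ ∑ j ∈ N', M ^ rank (u (k + 1) j) :=
              Finset.single_le_sum (f := fun j => M ^ rank (u (k + 1) j))
                (fun j _ => Nat.zero_le _) hi₀
      rw [hsplitk k, hsplitk (k + 1)]
      omega
    have hmono : ∀ k, k ≤ Φ k := by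
      intro k
      induction k with
      | zero => exact Nat.zero_le _
      | succ k ih => exact Nat.succ_le_of_lt (lt_of_le_of_lt ih (hkey k))
    have hbound : ∀ k, Φ k ≤ Fintype.card ι * M ^ V.card := by
      intro k
      calc Φ k ≤ ∑ _i : ι, M ^ V.card :=
            Finset.sum_le_sum fun i _ => Nat.pow_le_pow_right hM1 (hrank_le _)
        _ = Fintype.card ι * M ^ V.card := by
            rw [Finset.sum_const, smul_eq_mul, Finset.card_univ]
    have hc1 := hmono (Fintype.card ι * M ^ V.card + 1)
    have hc2 := hbound (Fintype.card ι * M ^ V.card + 1)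
    omega
  · -- Part 2: a state with no improvement step is a pure Nash equilibrium
    intro s ord hV hinj hno
    refine ⟨hV, hinj, ?_⟩
    intro i a ha ord' hre
    by_contra hlt
    push_neg at hlt
    obtain ⟨p, hpinj, hpm⟩ := exists_priority (fun j => G.ordUtil s ord j)
    have hnewT : newTasks {i} s (Function.update s i a) = a \ s i := by
      unfold BudgetGame.newTasks
      rw [Finset.singleton_biUnion, Function.update_self]
    refine hno ⟨Function.update s i a, ord', p, hpinj, hpm, {i},
      Finset.singleton_nonempty i, ?_, ?_, ?_, ?_, ?_⟩
    · intro j hj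
      exact Function.update_of_ne (by simpa using hj) _ _
    · intro j hj
      rw [Finset.mem_singleton.mp hj, Function.update_self]
      exact ha
    · intro j hj
      rw [Finset.mem_singleton.mp hj]
      refine ⟨ord', ?_, ?_⟩
      · rw [Function.update_self]
        exact hre
      · rw [Function.update_self]
        exact hlt
    · rw [hnewT]
      exact hre
    · intro r t ht t' ht' hplt
      exfalso
      rw [hnewT] at ht ht'
      have h1 : G.owner t = i := G.strat_owned i a ha t (Finset.mem_sdiff.mp ht).1
      have h2 : G.owner t' = i := G.strat_owned i a ha t' (Finset.mem_sdiff.mp ht').1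
      rw [h1, h2] at hplt
      exact lt_irrefl _ hplt


open BudgetGame in
/-- under the tie-breaking rule `p_max`, there is no infinite sequence
of simultaneous improvement steps, and a state admitting no such step is a pure Nash
equilibrium (so every sequence of such steps is finite and terminates in one). -/
theorem stmt_16 {ι ρ τ : Type*} [Fintype ι] [Fintype ρ] [Fintype τ]
    [DecidableEq ι] [DecidableEq τ]
    (G : BudgetGame ι ρ τ) :
    (¬ ∃ f : ℕ → (ι → Finset τ) × (ρ → τ → ℕ),
      G.Valid (f 0).1 ∧ InjOrd (f 0).2 ∧
      ∀ k : ℕ, SimImproveMax G (f k).1 (f k).2 (f (k + 1)).1 (f (k + 1)).2) ∧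
    (∀ (s : ι → Finset τ) (ord : ρ → τ → ℕ), G.Valid s → InjOrd ord →
      (¬ ∃ (s' : ι → Finset τ) (ord' : ρ → τ → ℕ), SimImproveMax G s ord s' ord') →
      G.ordNE s ord) := by
  exact stmt_16' G

end
end
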